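/- arXiv:2201.00453 — 4 statements merged into one kernel-verified Lean document; each statement's English description precedes it below -/
import Mathlib

section
/- Let ℓ ≥ 1 and let F_ℓ = ℓP_3 be the linear forest consisting of ℓ vertex-disjoint paths on 3 vertices, so that p = ℓ − 1. Then for every integer m with m ≥ p+1 there exists N (depending on m and ℓ) such that for all n ≥ N: ex(m,n;ℓP_3) = p·n + m − p. Moreover, every ℓP_3-free bipartite graph with parts of sizes m and n having exactly p·n + m − p edges is isomorphic to the graph obtained from K_{p,n} by adding m − p new vertices and joining them by m − p independent edges to m − p distinct vertices of degree p of K_{p,n} (vertices in the side of size n). -/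
open SimpleGraph

/-- `G` contains a subgraph isomorphic to `H`, i.e. there is an injective
graph homomorphism from `H` into `G`. -/
def ContainsCopy {α β : Type*} (G : SimpleGraph α) (H : SimpleGraph β) : Prop :=
  ∃ f : β → α, Function.Injective f ∧ ∀ ⦃a b⦄, H.Adj a b → G.Adj (f a) (f b)

/-- The linear forest `P_{k 0} ∪ ⋯ ∪ P_{k (ℓ-1)}`, a disjoint union of paths. -/
def linearForest {ℓ : ℕ} (k : Fin ℓ → ℕ) : SimpleGraph ((i : Fin ℓ) × Fin (k i)) where
  Adj a b := a.1 = b.1 ∧ (a.2.val + 1 = b.2.val ∨ b.2.val + 1 = a.2.val)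
  symm := ⟨fun a b h => ⟨h.1.symm, h.2.symm⟩⟩
  loopless := ⟨fun a h => by have := h.2; omega⟩

/-- The path on `k` vertices. -/
def pathG (k : ℕ) : SimpleGraph (Fin k) where
  Adj a b := a.val + 1 = b.val ∨ b.val + 1 = a.val
  symm := ⟨fun a b h => h.symm⟩
  loopless := ⟨fun a h => by omega⟩

/-- A graph on `Fin m ⊕ Fin n` respects the bipartition into the two `Fin` parts. -/
def IsBip {m n : ℕ} (G : SimpleGraph (Fin m ⊕ Fin n)) : Prop :=
  ∀ a b, G.Adj a b → a.isLeft ≠ b.isLeft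

/-- The bipartite graph on parts `Fin m` and `Fin n` whose edges are given by
the relation `r`. -/
def bipGraph (m n : ℕ) (r : Fin m → Fin n → Prop) : SimpleGraph (Fin m ⊕ Fin n) where
  Adj a b := (∃ i j, r i j ∧ a = Sum.inl i ∧ b = Sum.inr j) ∨
             (∃ i j, r i j ∧ a = Sum.inr j ∧ b = Sum.inl i)
  symm := ⟨fun a b h => by
    rcases h with ⟨i, j, hr, ha, hb⟩ | ⟨i, j, hr, ha, hb⟩
    · exact Or.inr ⟨i, j, hr, hb, ha⟩
    · exact Or.inl ⟨i, j, hr, hb, ha⟩⟩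
  loopless := ⟨fun a h => by
    rcases h with ⟨i, j, _, h1, h2⟩ | ⟨i, j, _, h1, h2⟩ <;> subst h1 <;> simp at h2⟩

/-- The bipartite Turán number `ex(m, n; H)`: the maximum number of edges of an
`H`-free bipartite graph with parts of sizes `m` and `n`. -/
noncomputable def bipEx (m n : ℕ) {β : Type*} (H : SimpleGraph β) : ℕ :=
  sSup {e | ∃ G : SimpleGraph (Fin m ⊕ Fin n),
    IsBip G ∧ ¬ ContainsCopy G H ∧ G.edgeSet.ncard = e}

-- The adjacency matrix of a graph on `Fin n`, over `ℝ`.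
open Classical in
noncomputable def adjMat {n : ℕ} (G : SimpleGraph (Fin n)) : Matrix (Fin n) (Fin n) ℝ :=
  fun i j => if G.Adj i j then 1 else 0

/-- The spectral radius (largest adjacency eigenvalue) of a graph on `Fin n`. -/
noncomputable def specRad {n : ℕ} (G : SimpleGraph (Fin n)) : ℝ :=
  sSup {μ : ℝ | Module.End.HasEigenvalue (Matrix.toLin' (adjMat G)) μ}

/-- The least adjacency eigenvalue of a graph on `Fin n`. -/
noncomputable def leastEig {n : ℕ} (G : SimpleGraph (Fin n)) : ℝ :=
  sInf {μ : ℝ | Module.End.HasEigenvalue (Matrix.toLin' (adjMat G)) μ}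

section Aux
open Finset Sum

-- ### auxiliary lemmas

lemma bipGraph_adj' {m n : ℕ} (r : Fin m → Fin n → Prop) {a b : Fin m ⊕ Fin n} :
    (bipGraph m n r).Adj a b ↔ ((∃ i j, r i j ∧ a = Sum.inl i ∧ b = Sum.inr j) ∨
      (∃ i j, r i j ∧ a = Sum.inr j ∧ b = Sum.inl i)) := Iff.rfl

lemma linearForest_adj' {ℓ : ℕ} (k : Fin ℓ → ℕ) {a b : (i : Fin ℓ) × Fin (k i)} :
    (linearForest k).Adj a b ↔ (a.1 = b.1 ∧ (a.2.val + 1 = b.2.val ∨ b.2.val + 1 = a.2.val)) :=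
  Iff.rfl

lemma bipGraph_adj_inl_inr {m n : ℕ} (r : Fin m → Fin n → Prop) (i : Fin m) (j : Fin n) :
    (bipGraph m n r).Adj (inl i) (inr j) ↔ r i j := by
  constructor
  · rw [bipGraph_adj']; rintro (⟨i', j', hr, h1, h2⟩ | ⟨i', j', hr, h1, h2⟩) <;> simp_all
  · intro h; exact (bipGraph_adj' r).2 (Or.inl ⟨i, j, h, rfl, rfl⟩)

lemma bipGraph_isBip {m n : ℕ} (r : Fin m → Fin n → Prop) : IsBip (bipGraph m n r) := by
  intro a b h
  rcases (bipGraph_adj' r).1 h with (⟨i, j, hr, h1, h2⟩ | ⟨i, j, hr, h1, h2⟩) <;> subst h1 <;> subst h2 <;> simp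

open Classical in
/-- degree of a left vertex -/
noncomputable def degL {m n : ℕ} (G : SimpleGraph (Fin m ⊕ Fin n)) (x : Fin m) : ℕ :=
  (Finset.univ.filter fun j => G.Adj (inl x) (inr j)).card

open Classical in
lemma card_pairs_eq_sum {m n : ℕ} (R : Fin m → Fin n → Prop) :
    (Finset.univ.filter fun ij : Fin m × Fin n => R ij.1 ij.2).card
      = ∑ a : Fin m, (Finset.univ.filter fun b => R a b).card := by
  classical
  rw [Finset.card_eq_sum_card_fiberwise (f := Prod.fst) (t := Finset.univ) (fun x _ => mem_univ _)]
  refine Finset.sum_congr rfl fun a _ => ?_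
  refine Finset.card_nbij (fun ij => ij.2) ?_ ?_ ?_
  · intro ij hij
    simp only [Finset.mem_coe, Finset.mem_filter, Finset.mem_univ, true_and] at hij ⊢
    obtain ⟨h1, h2⟩ := hij; rwa [← h2]
  · intro ij hij ij' hij' h
    simp only [Finset.coe_filter, Finset.mem_filter, Finset.mem_univ, true_and,
      Set.mem_setOf_eq] at hij hij'
    exact Prod.ext (hij.2.trans hij'.2.symm) h
  · intro b hb
    simp only [Finset.coe_filter, Set.mem_setOf_eq, mem_univ, true_and] at hb
    exact ⟨(a, b), by simp [hb], rfl⟩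

open Classical in
lemma ncard_eq_card_pairs {m n : ℕ} (G : SimpleGraph (Fin m ⊕ Fin n)) (hb : IsBip G) :
    G.edgeSet.ncard
      = (Finset.univ.filter fun ij : Fin m × Fin n => G.Adj (inl ij.1) (inr ij.2)).card := by
  classical
  have him : G.edgeSet =
      (fun ij : Fin m × Fin n => s(inl ij.1, inr ij.2)) ''
        {ij : Fin m × Fin n | G.Adj (inl ij.1) (inr ij.2)} := by
    ext e
    refine Sym2.ind (fun u v => ?_) e
    simp only [mem_edgeSet, Set.mem_image, Set.mem_setOf_eq]
    constructor
    · intro h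
      match u, v with
      | inl i, inl i' => exact absurd (hb _ _ h) (by simp)
      | inr j, inr j' => exact absurd (hb _ _ h) (by simp)
      | inl i, inr j => exact ⟨(i, j), h, rfl⟩
      | inr j, inl i => exact ⟨(i, j), h.symm, Sym2.eq_swap⟩
    · rintro ⟨⟨i, j⟩, h, he⟩
      rw [← SimpleGraph.mem_edgeSet, ← he, SimpleGraph.mem_edgeSet]
      exact h
  rw [him]
  rw [Set.ncard_image_of_injOn]
  · have : {ij : Fin m × Fin n | G.Adj (inl ij.1) (inr ij.2)} =
        ↑(Finset.univ.filter fun ij : Fin m × Fin n => G.Adj (inl ij.1) (inr ij.2)) := by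
      ext ij; simp
    rw [this, Set.ncard_coe_finset]
  · rintro ⟨i, j⟩ _ ⟨i', j'⟩ _ h
    rw [Sym2.eq, Sym2.rel_iff', Prod.mk.injEq, Prod.mk.injEq] at h
    rcases h with ⟨h1, h2⟩ | ⟨h1, h2⟩
    · simp_all
    · simp at h1

open Classical in
lemma ncard_eq_sum_degL {m n : ℕ} (G : SimpleGraph (Fin m ⊕ Fin n)) (hb : IsBip G) :
    G.edgeSet.ncard = ∑ x : Fin m, degL G x := by
  rw [ncard_eq_card_pairs G hb,
    card_pairs_eq_sum (fun i j => G.Adj (inl i) (inr j))]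
  rfl

lemma copy_of_fun {V : Type*} (G : SimpleGraph V) (ℓ : ℕ) (f : Fin ℓ → Fin 3 → V)
    (hinj : ∀ i j i' j', f i j = f i' j' → i = i' ∧ j = j')
    (h1 : ∀ i, G.Adj (f i 1) (f i 0)) (h2 : ∀ i, G.Adj (f i 1) (f i 2)) :
    ContainsCopy G (linearForest fun _ : Fin ℓ => 3) := by
  refine ⟨fun q => f q.1 q.2, ?_, ?_⟩
  · rintro ⟨i, j⟩ ⟨i', j'⟩ h
    obtain ⟨hi, hj⟩ := hinj _ _ _ _ h
    subst hi; subst hj; rfl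
  · rintro ⟨i, j⟩ ⟨i', j'⟩ h
    obtain ⟨hfst, hsnd⟩ := (linearForest_adj' _).1 h
    simp only at hfst
    subst hfst
    dsimp only at hsnd
    have hj : j.val < 3 := j.isLt
    have hj' : j'.val < 3 := j'.isLt
    rcases hsnd with h | h
    · -- j + 1 = j'
      have : (j.val = 0 ∧ j'.val = 1) ∨ (j.val = 1 ∧ j'.val = 2) := by omega
      rcases this with ⟨e1, e2⟩ | ⟨e1, e2⟩
      · have : j = 0 := Fin.ext e1
        have h2' : j' = 1 := Fin.ext e2
        subst this; subst h2'
        exact (h1 i).symm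
      · have : j = 1 := Fin.ext e1
        have h2' : j' = 2 := Fin.ext e2
        subst this; subst h2'
        exact h2 i
    · have : (j'.val = 0 ∧ j.val = 1) ∨ (j'.val = 1 ∧ j.val = 2) := by omega
      rcases this with ⟨e1, e2⟩ | ⟨e1, e2⟩
      · have : j' = 0 := Fin.ext e1
        have h2' : j = 1 := Fin.ext e2
        subst this; subst h2'
        exact h1 i
      · have : j' = 1 := Fin.ext e1
        have h2' : j = 2 := Fin.ext e2
        subst this; subst h2'
        exact (h2 i).symm

open Classical in
lemma greedy {m n : ℕ} (hn : 0 < n) (r : Fin m → Fin n → Prop) (T : Finset (Fin m)) :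
    ∀ F : Finset (Fin n),
    (∀ x ∈ T, 2 * T.card + F.card ≤ (Finset.univ.filter fun j => r x j).card) →
    ∃ g : Fin m → Fin n × Fin n,
      (∀ x ∈ T, r x (g x).1 ∧ r x (g x).2 ∧ (g x).1 ≠ (g x).2 ∧ (g x).1 ∉ F ∧ (g x).2 ∉ F)
      ∧ ∀ x ∈ T, ∀ x' ∈ T, x ≠ x' →
          (g x).1 ≠ (g x').1 ∧ (g x).1 ≠ (g x').2 ∧ (g x).2 ≠ (g x').1 ∧ (g x).2 ≠ (g x').2 := by
  classical
  induction T using Finset.induction_on with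
  | empty =>
    intro F _
    exact ⟨fun _ => (⟨0, hn⟩, ⟨0, hn⟩), fun x hx => absurd hx (Finset.notMem_empty x),
      fun x hx => absurd hx (Finset.notMem_empty x)⟩
  | @insert a T ha ih =>
    intro F hdeg
    -- pick two neighbors of a outside F
    have hda : 2 * (insert a T).card + F.card ≤ (Finset.univ.filter fun j => r a j).card :=
      hdeg a (Finset.mem_insert_self a T)
    have hcard2 : 1 < ((Finset.univ.filter fun j => r a j) \ F).card := by
      have := Finset.le_card_sdiff F (Finset.univ.filter fun j => r a j)
      have hc : (insert a T).card = T.card + 1 := Finset.card_insert_of_notMem ha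
      omega
    obtain ⟨y1, hy1, y2, hy2, hy12⟩ := Finset.one_lt_card.mp hcard2
    rw [Finset.mem_sdiff, Finset.mem_filter] at hy1 hy2
    obtain ⟨g, hg1, hg2⟩ := ih (insert y1 (insert y2 F)) (by
      intro x hx
      have hle := hdeg x (Finset.mem_insert_of_mem hx)
      have hc : (insert a T).card = T.card + 1 := Finset.card_insert_of_notMem ha
      have : (insert y1 (insert y2 F)).card ≤ F.card + 2 := by
        calc (insert y1 (insert y2 F)).card ≤ (insert y2 F).card + 1 :=
              Finset.card_insert_le _ _
          _ ≤ F.card + 2 := by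
              have := Finset.card_insert_le y2 F; omega
      omega)
    refine ⟨Function.update g a (y1, y2), ?_, ?_⟩
    · intro x hx
      simp only [Function.update_apply]
      split_ifs with h
      · exact ⟨by rw [h]; exact hy1.1.2, by rw [h]; exact hy2.1.2, hy12, hy1.2, hy2.2⟩
      · have hxT : x ∈ T := (Finset.mem_insert.mp hx).resolve_left h
        have := hg1 x hxT
        refine ⟨this.1, this.2.1, this.2.2.1, ?_, ?_⟩
        · intro hmem; exact this.2.2.2.1 (by simp [hmem])
        · intro hmem; exact this.2.2.2.2 (by simp [hmem])
    · intro x hx x' hx' hxx'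
      simp only [Function.update_apply]
      split_ifs with h1 h2 h2
      · exact absurd (h1.trans h2.symm) hxx'
      · have hx'T : x' ∈ T := (Finset.mem_insert.mp hx').resolve_left h2
        have := hg1 x' hx'T
        have h1' := this.2.2.2.1
        have h2' := this.2.2.2.2
        simp only [Finset.mem_insert] at h1' h2'
        push_neg at h1' h2'
        exact ⟨fun h => h1'.1 h.symm, fun h => h2'.1 h.symm,
          fun h => h1'.2.1 h.symm, fun h => h2'.2.1 h.symm⟩
      · have hxT : x ∈ T := (Finset.mem_insert.mp hx).resolve_left h1
        have := hg1 x hxT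
        have h1' := this.2.2.2.1
        have h2' := this.2.2.2.2
        simp only [Finset.mem_insert] at h1' h2'
        push_neg at h1' h2'
        exact ⟨h1'.1, h1'.2.1, h2'.1, h2'.2.1⟩
      · have hxT : x ∈ T := (Finset.mem_insert.mp hx).resolve_left h1
        have hx'T : x' ∈ T := (Finset.mem_insert.mp hx').resolve_left h2
        exact hg2 x hxT x' hx'T hxx'
set_option maxHeartbeats 1000000 in
open Classical in
lemma copy_aux {m n : ℕ} (hn : 0 < n) (G : SimpleGraph (Fin m ⊕ Fin n)) (ℓ : ℕ) (hℓ : 1 ≤ ℓ)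
    (S : Finset (Fin m)) (hS : S.card = ℓ - 1)
    (hdeg : ∀ x ∈ S, 2 * ℓ ≤ degL G x)
    (u v w : Fin m ⊕ Fin n) (huv : G.Adj v u) (hvw : G.Adj v w) (huw : u ≠ w)
    (hSu : ∀ x ∈ S, inl x ≠ u ∧ inl x ≠ v ∧ inl x ≠ w)
    (F : Finset (Fin n)) (hF : F.card ≤ 2)
    (hYF : ∀ y : Fin n, inr y = u ∨ inr y = v ∨ inr y = w → y ∈ F) :
    ContainsCopy G (linearForest fun _ : Fin ℓ => 3) := by
  classical
  obtain ⟨g, hg1, hg2⟩ := greedy hn (fun x j => G.Adj (inl x) (inr j)) S F (by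
    intro x hx
    have h1 := hdeg x hx
    have h2 : (Finset.univ.filter fun j => G.Adj (inl x) (inr j)).card = degL G x := rfl
    rw [h2, hS]
    omega)
  let e := S.orderIsoOfFin hS
  set T : Fin ℓ → Fin 3 → (Fin m ⊕ Fin n) :=
    (fun i => if h : (i : ℕ) < ℓ - 1 then
        ![inr (g ((e ⟨(i : ℕ), h⟩ : {x // x ∈ S}) : Fin m)).1,
          inl ((e ⟨(i : ℕ), h⟩ : {x // x ∈ S}) : Fin m),
          inr (g ((e ⟨(i : ℕ), h⟩ : {x // x ∈ S}) : Fin m)).2]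
      else ![u, v, w]) with hT
  have hmemS : ∀ (i : Fin ℓ) (h : (i : ℕ) < ℓ - 1),
      ((e ⟨(i : ℕ), h⟩ : {x // x ∈ S}) : Fin m) ∈ S := fun i h => (e ⟨(i : ℕ), h⟩).2
  -- special-vertex avoidance facts
  have hav : ∀ x ∈ S,
      (inr (g x).1 : Fin m ⊕ Fin n) ≠ u ∧ (inr (g x).1 : Fin m ⊕ Fin n) ≠ v ∧
      (inr (g x).1 : Fin m ⊕ Fin n) ≠ w ∧ (inr (g x).2 : Fin m ⊕ Fin n) ≠ u ∧
      (inr (g x).2 : Fin m ⊕ Fin n) ≠ v ∧ (inr (g x).2 : Fin m ⊕ Fin n) ≠ w := by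
    intro x hx
    refine ⟨fun h => (hg1 x hx).2.2.2.1 (hYF _ (Or.inl h)),
      fun h => (hg1 x hx).2.2.2.1 (hYF _ (Or.inr (Or.inl h))),
      fun h => (hg1 x hx).2.2.2.1 (hYF _ (Or.inr (Or.inr h))),
      fun h => (hg1 x hx).2.2.2.2 (hYF _ (Or.inl h)),
      fun h => (hg1 x hx).2.2.2.2 (hYF _ (Or.inr (Or.inl h))),
      fun h => (hg1 x hx).2.2.2.2 (hYF _ (Or.inr (Or.inr h)))⟩
  have hMixed : ∀ (i : Fin ℓ) (hi : (i : ℕ) < ℓ - 1) (j j' : Fin 3),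
      T i j ≠ (![u, v, w] : Fin 3 → Fin m ⊕ Fin n) j' := by
    intro i hi j j'
    rw [hT]
    simp only [dif_pos hi]
    set x : Fin m := ((e ⟨(i : ℕ), hi⟩ : {x // x ∈ S}) : Fin m) with hx
    have hxS : x ∈ S := hmemS i hi
    have h1 := hSu x hxS
    have h2 := hav x hxS
    clear_value x
    clear hT hg1 hg2 hav hdeg hYF hSu hxS
    clear_value T e
    fin_cases j <;> fin_cases j' <;>
      simp_all [Matrix.cons_val_zero, Matrix.cons_val_one, Matrix.head_cons]
  have hT1 : ∀ i : Fin ℓ, Function.Injective (T i) := by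
    intro i j j' h
    rw [hT] at h
    by_cases hi : (i : ℕ) < ℓ - 1
    · simp only [dif_pos hi] at h
      set x : Fin m := ((e ⟨(i : ℕ), hi⟩ : {x // x ∈ S}) : Fin m) with hx
      have hxS : x ∈ S := hmemS i hi
      have hd := (hg1 x hxS).2.2.1
      have hd' : (g x).2 ≠ (g x).1 := Ne.symm hd
      have hgg := (hg1 x hxS).2.2.1
      clear_value x
      clear hT hg1 hg2 hav hdeg hYF hSu hMixed hxS
      clear_value T e
      fin_cases j <;> fin_cases j' <;>
        simp_all [Matrix.cons_val_zero, Matrix.cons_val_one, Matrix.head_cons]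
    · simp only [dif_neg hi] at h
      have h1 : v ≠ u := huv.ne
      have h2 : v ≠ w := hvw.ne
      have h1' : u ≠ v := huv.ne'
      have h2' : w ≠ v := hvw.ne'
      have huw' : w ≠ u := Ne.symm huw
      clear hT hg1 hg2 hav hdeg hYF hSu hMixed
      clear_value T e
      fin_cases j <;> fin_cases j' <;>
        simp_all [Matrix.cons_val_zero, Matrix.cons_val_one, Matrix.head_cons]
  have hT2 : ∀ i i' : Fin ℓ, i ≠ i' → ∀ j j' : Fin 3, T i j ≠ T i' j' := by
    intro i i' hii' j j'
    by_cases hi : (i : ℕ) < ℓ - 1 <;> by_cases hi' : (i' : ℕ) < ℓ - 1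
    · -- both S-triples
      rw [hT]
      simp only [dif_pos hi, dif_pos hi']
      set x : Fin m := ((e ⟨(i : ℕ), hi⟩ : {x // x ∈ S}) : Fin m) with hx
      set x' : Fin m := ((e ⟨(i' : ℕ), hi'⟩ : {x // x ∈ S}) : Fin m) with hx'
      have hxS : x ∈ S := hmemS i hi
      have hx'S : x' ∈ S := hmemS i' hi'
      have hxx' : x ≠ x' := by
        intro h
        apply hii'
        have : (⟨(i : ℕ), hi⟩ : Fin (ℓ - 1)) = ⟨(i' : ℕ), hi'⟩ :=
          e.injective (Subtype.ext h)
        rw [Fin.mk.injEq] at this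
        exact Fin.ext this
      have hp := hg2 x hxS x' hx'S hxx'
      have hp1 : (g x').1 ≠ (g x).1 := Ne.symm hp.1
      have hp2 : (g x').2 ≠ (g x).1 := Ne.symm hp.2.1
      have hp3 : (g x').1 ≠ (g x).2 := Ne.symm hp.2.2.1
      have hp4 : (g x').2 ≠ (g x).2 := Ne.symm hp.2.2.2
      have hxx'' : x' ≠ x := Ne.symm hxx'
      clear_value x x'
      clear hT hg1 hg2 hav hdeg hYF hSu hMixed hxS hx'S
      clear_value T e
      fin_cases j <;> fin_cases j' <;>
        simp_all [Matrix.cons_val_zero, Matrix.cons_val_one, Matrix.head_cons]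
    · have : T i' = ![u, v, w] := by rw [hT]; simp only [dif_neg hi']
      rw [this]
      exact hMixed i hi j j'
    · have : T i = ![u, v, w] := by rw [hT]; simp only [dif_neg hi]
      rw [this]
      exact fun h => hMixed i' hi' j' j h.symm
    · exfalso
      apply hii'
      have hiv := i.isLt
      have hi'v := i'.isLt
      exact Fin.ext (by omega)
  refine copy_of_fun G ℓ T ?_ ?_ ?_
  · intro i j i' j' h
    by_cases hii' : i = i'
    · subst hii'; exact ⟨rfl, hT1 i h⟩
    · exact absurd h (hT2 i i' hii' j j')
  · intro i
    rw [hT]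
    by_cases hi : (i : ℕ) < ℓ - 1
    · simp only [dif_pos hi, Matrix.cons_val_one, Matrix.head_cons, Matrix.cons_val_zero]
      exact (hg1 _ (hmemS i hi)).1
    · simp only [dif_neg hi, Matrix.cons_val_one, Matrix.head_cons, Matrix.cons_val_zero]
      exact huv
  · intro i
    rw [hT]
    by_cases hi : (i : ℕ) < ℓ - 1
    · simp only [dif_pos hi]
      show G.Adj _ (![_, _, _] 2)
      simp only [Matrix.cons_val_one, Matrix.head_cons, Matrix.cons_val_two, Matrix.tail_cons]
      exact (hg1 _ (hmemS i hi)).2.1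
    · simp only [dif_neg hi]
      show G.Adj (![u,v,w] 1) (![u,v,w] 2)
      simp only [Matrix.cons_val_one, Matrix.head_cons, Matrix.cons_val_two, Matrix.tail_cons]
      exact hvw
open Classical in
noncomputable def bigS {m n : ℕ} (G : SimpleGraph (Fin m ⊕ Fin n)) (ℓ : ℕ) : Finset (Fin m) :=
  Finset.univ.filter fun x => 2 * ℓ + 2 ≤ degL G x

open Classical in
lemma bigS_card_le {m n : ℕ} (hn : 0 < n) (G : SimpleGraph (Fin m ⊕ Fin n)) (ℓ : ℕ)
    (hℓ : 1 ≤ ℓ) (hfree : ¬ ContainsCopy G (linearForest fun _ : Fin ℓ => 3)) :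
    (bigS G ℓ).card ≤ ℓ - 1 := by
  classical
  by_contra hcon
  have hge : ℓ ≤ (bigS G ℓ).card := by omega
  obtain ⟨S', hS'sub, hS'card⟩ := Finset.exists_subset_card_eq hge
  have hS'ne : S'.Nonempty := by rw [← Finset.card_pos, hS'card]; omega
  obtain ⟨x, hx⟩ := hS'ne
  have hxdeg : 2 * ℓ + 2 ≤ degL G x := by
    have := hS'sub hx
    simp only [bigS, Finset.mem_filter] at this
    exact this.2
  have h2 : 1 < (Finset.univ.filter fun j => G.Adj (inl x) (inr j)).card := by
    have : (Finset.univ.filter fun j => G.Adj (inl x) (inr j)).card = degL G x := rfl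
    omega
  obtain ⟨y1, hy1, y2, hy2, hy12⟩ := Finset.one_lt_card.mp h2
  rw [Finset.mem_filter] at hy1 hy2
  refine hfree (copy_aux hn G ℓ hℓ (S'.erase x) ?_ ?_
    (inr y1) (inl x) (inr y2) hy1.2 hy2.2 (by simp [hy12]) ?_ {y1, y2} ?_ ?_)
  · rw [Finset.card_erase_of_mem hx, hS'card]
  · intro x' hx'
    have := hS'sub (Finset.mem_of_mem_erase hx')
    simp only [bigS, Finset.mem_filter] at this
    omega
  · intro x' hx'
    have hne : x' ≠ x := Finset.ne_of_mem_erase hx'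
    exact ⟨by simp, by simp [hne], by simp⟩
  · have := Finset.card_insert_le y1 ({y2} : Finset (Fin n))
    simp at this ⊢
    omega
  · intro y hy
    rcases hy with h | h | h
    · simp only [inr.injEq] at h; simp [h]
    · simp at h
    · simp only [inr.injEq] at h; simp [h]

open Classical in
lemma outside_deg_le {m n : ℕ} (hn : 0 < n) (G : SimpleGraph (Fin m ⊕ Fin n)) (ℓ : ℕ)
    (hℓ : 1 ≤ ℓ) (hfree : ¬ ContainsCopy G (linearForest fun _ : Fin ℓ => 3))
    (hcard : (bigS G ℓ).card = ℓ - 1) :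
    ∀ x, x ∉ bigS G ℓ → degL G x ≤ 1 := by
  classical
  intro x hx
  by_contra hcon
  have h2 : 1 < (Finset.univ.filter fun j => G.Adj (inl x) (inr j)).card := by
    have : (Finset.univ.filter fun j => G.Adj (inl x) (inr j)).card = degL G x := rfl
    omega
  obtain ⟨y1, hy1, y2, hy2, hy12⟩ := Finset.one_lt_card.mp h2
  rw [Finset.mem_filter] at hy1 hy2
  refine hfree (copy_aux hn G ℓ hℓ (bigS G ℓ) hcard ?_
    (inr y1) (inl x) (inr y2) hy1.2 hy2.2 (by simp [hy12]) ?_ {y1, y2} ?_ ?_)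
  · intro x' hx'
    simp only [bigS, Finset.mem_filter] at hx'
    omega
  · intro x' hx'
    have hne : x' ≠ x := fun h => hx (h ▸ hx')
    exact ⟨by simp, by simp [hne], by simp⟩
  · have := Finset.card_insert_le y1 ({y2} : Finset (Fin n))
    simp at this ⊢
    omega
  · intro y hy
    rcases hy with h | h | h
    · simp only [inr.injEq] at h; simp [h]
    · simp at h
    · simp only [inr.injEq] at h; simp [h]

open Classical in
lemma right_deg_le {m n : ℕ} (hn : 0 < n) (G : SimpleGraph (Fin m ⊕ Fin n)) (ℓ : ℕ)
    (hℓ : 1 ≤ ℓ) (hfree : ¬ ContainsCopy G (linearForest fun _ : Fin ℓ => 3))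
    (hcard : (bigS G ℓ).card = ℓ - 1) :
    ∀ y : Fin n,
      (Finset.univ.filter fun x => x ∉ bigS G ℓ ∧ G.Adj (inl x) (inr y)).card ≤ 1 := by
  classical
  intro y
  by_contra hcon
  have h2 : 1 < (Finset.univ.filter fun x => x ∉ bigS G ℓ ∧ G.Adj (inl x) (inr y)).card := by
    omega
  obtain ⟨x1, hx1, x2, hx2, hx12⟩ := Finset.one_lt_card.mp h2
  rw [Finset.mem_filter] at hx1 hx2
  refine hfree (copy_aux hn G ℓ hℓ (bigS G ℓ) hcard ?_
    (inl x1) (inr y) (inl x2) hx1.2.2.symm hx2.2.2.symm (by simp [hx12]) ?_ {y} ?_ ?_)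
  · intro x' hx'
    simp only [bigS, Finset.mem_filter] at hx'
    omega
  · intro x' hx'
    have h1 : x' ≠ x1 := fun h => hx1.2.1 (h ▸ hx')
    have h2 : x' ≠ x2 := fun h => hx2.2.1 (h ▸ hx')
    exact ⟨by simp [h1], by simp, by simp [h2]⟩
  · simp
  · intro y' hy'
    rcases hy' with h | h | h
    · simp at h
    · simp only [inr.injEq] at h; simp [h]
    · simp at h
open Classical in
lemma perm_extend {q n : ℕ} (hq : q ≤ n) (ψ : Fin q → Fin n) (hψ : Function.Injective ψ) :
    ∃ τ : Equiv.Perm (Fin n), ∀ k : Fin q, τ (ψ k) = Fin.castLE hq k := by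
  classical
  have hinjB : Function.Injective (Fin.castLE hq) := Fin.castLE_injective hq
  let e1 : Fin q ≃ Set.range ψ := Equiv.ofInjective ψ hψ
  let e2 : Fin q ≃ Set.range (Fin.castLE hq) := Equiv.ofInjective _ hinjB
  have hAcard : Fintype.card (Set.range ψ) = q := by
    rw [Set.card_range_of_injective hψ, Fintype.card_fin]
  have hBcard : Fintype.card (Set.range (Fin.castLE hq)) = q := by
    rw [Set.card_range_of_injective hinjB, Fintype.card_fin]
  have hcompl : Fintype.card {x : Fin n // ¬ x ∈ Set.range ψ}
      = Fintype.card {x : Fin n // ¬ x ∈ Set.range (Fin.castLE hq)} := by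
    rw [Fintype.card_subtype_compl, Fintype.card_subtype_compl]
    congr 1
    · exact hAcard.trans hBcard.symm
  let e3 : {x : Fin n // ¬ x ∈ Set.range ψ} ≃ {x : Fin n // ¬ x ∈ Set.range (Fin.castLE hq)} :=
    Fintype.equivOfCardEq hcompl
  refine ⟨((Equiv.sumCompl (· ∈ Set.range ψ)).symm.trans
      ((Equiv.sumCongr (e1.symm.trans e2) e3).trans
        (Equiv.sumCompl (· ∈ Set.range (Fin.castLE hq))))), fun k => ?_⟩
  have hmem : ψ k ∈ Set.range ψ := ⟨k, rfl⟩
  simp only [Equiv.trans_apply]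
  rw [Equiv.sumCompl_symm_apply_of_pos hmem]
  simp only [Equiv.sumCongr_apply, Sum.map_inl, Equiv.sumCompl_apply_inl]
  have h1 : e1.symm ⟨ψ k, hmem⟩ = k := by
    have : (⟨ψ k, hmem⟩ : Set.range ψ) = e1 k := by
      apply Subtype.ext; rfl
    rw [this, Equiv.symm_apply_apply]
  rw [Equiv.trans_apply, h1]
  rfl
lemma bipGraph_not_adj_same {m n : ℕ} (r : Fin m → Fin n → Prop) :
    (∀ i i' : Fin m, ¬ (bipGraph m n r).Adj (inl i) (inl i')) ∧
    (∀ j j' : Fin n, ¬ (bipGraph m n r).Adj (inr j) (inr j')) := by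
  constructor
  · intro i i' h
    exact absurd (bipGraph_isBip r _ _ h) (by simp)
  · intro j j' h
    exact absurd (bipGraph_isBip r _ _ h) (by simp)

open Classical in
lemma build_iso {m n ℓ : ℕ} (hℓ : 1 ≤ ℓ) (p : ℕ) (hp : p = ℓ - 1) (hm : p + 1 ≤ m)
    (hnm : m ≤ n)
    (G : SimpleGraph (Fin m ⊕ Fin n)) (hbip : IsBip G)
    (S : Finset (Fin m)) (hcard : S.card = p)
    (hfull : ∀ x ∈ S, ∀ j, G.Adj (inl x) (inr j))
    (φ : Fin m → Fin n)
    (hφ1 : ∀ x, x ∉ S → ∀ j, (G.Adj (inl x) (inr j) ↔ j = φ x))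
    (hφinj : ∀ x, x ∉ S → ∀ x', x' ∉ S → φ x = φ x' → x = x') :
    Nonempty (G ≃g bipGraph m n fun a b => (a : ℕ) < p ∨ (b : ℕ) + p = (a : ℕ)) := by
  classical
  have hpq : p + (m - p) = m := by omega
  let eS : {x // x ∈ S} ≃ Fin p := Fintype.equivFinOfCardEq (by
    rw [Fintype.card_coe, hcard])
  let eSc : {x // ¬ x ∈ S} ≃ Fin (m - p) := Fintype.equivFinOfCardEq (by
    rw [Fintype.card_subtype_compl, Fintype.card_fin, Fintype.card_coe, hcard])
  let σ : Fin m ≃ Fin m := (Equiv.sumCompl (· ∈ S)).symm.trans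
    ((Equiv.sumCongr eS eSc).trans (finSumFinEquiv.trans (finCongr hpq)))
  have hσ1 : ∀ x (hx : x ∈ S), (σ x : ℕ) = (eS ⟨x, hx⟩ : ℕ) := by
    intro x hx
    simp only [σ, Equiv.trans_apply]
    rw [Equiv.sumCompl_symm_apply_of_pos hx]
    simp [finSumFinEquiv]
  have hσ2 : ∀ x (hx : ¬ x ∈ S), (σ x : ℕ) = p + (eSc ⟨x, hx⟩ : ℕ) := by
    intro x hx
    simp only [σ, Equiv.trans_apply]
    rw [Equiv.sumCompl_symm_apply_of_neg hx]
    simp [finSumFinEquiv]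
  let ψ : Fin (m - p) → Fin n := fun k => φ ((eSc.symm k) : Fin m)
  have hψinj : Function.Injective ψ := by
    intro k k' h
    have h2 := hφinj _ (eSc.symm k).2 _ (eSc.symm k').2 h
    exact eSc.symm.injective (Subtype.ext h2)
  have hqn : m - p ≤ n := le_trans (Nat.sub_le m p) hnm
  obtain ⟨τ, hτ⟩ := perm_extend hqn ψ hψinj
  -- the key adjacency iff
  have key : ∀ (x : Fin m) (j : Fin n),
      G.Adj (inl x) (inr j) ↔ ((σ x : ℕ) < p ∨ (τ j : ℕ) + p = (σ x : ℕ)) := by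
    intro x j
    by_cases hx : x ∈ S
    · refine iff_of_true (hfull x hx j) (Or.inl ?_)
      rw [hσ1 x hx]
      exact (eS ⟨x, hx⟩).isLt
    · set k : Fin (m - p) := eSc ⟨x, hx⟩ with hk
      have hσx : (σ x : ℕ) = p + (k : ℕ) := hσ2 x hx
      have hψk : ψ k = φ x := by
        simp only [ψ, hk, Equiv.symm_apply_apply]
      rw [hφ1 x hx j]
      constructor
      · intro h
        subst h
        refine Or.inr ?_
        rw [hσx, ← hψk, hτ k]
        simp [Fin.castLE]
        omega
      · rintro (h | h)
        · omega
        · rw [hσx] at h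
          have hτj : (τ j : ℕ) = (k : ℕ) := by omega
          have : τ j = τ (ψ k) := by
            rw [hτ k]
            apply Fin.ext
            simpa using hτj
          have := τ.injective this
          rw [this, hψk]
  refine ⟨⟨Equiv.sumCongr σ τ, ?_⟩⟩
  rintro (x | j) (x' | j')
  · simp only [Equiv.sumCongr_apply, Sum.map_inl]
    constructor
    · intro h; exact absurd h ((bipGraph_not_adj_same _).1 _ _)
    · intro h; exact absurd (hbip _ _ h) (by simp)
  · simp only [Equiv.sumCongr_apply, Sum.map_inl, Sum.map_inr]
    rw [bipGraph_adj_inl_inr]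
    exact (key x j').symm
  · simp only [Equiv.sumCongr_apply, Sum.map_inl, Sum.map_inr]
    constructor
    · intro h
      rw [(bipGraph m n _).adj_comm, bipGraph_adj_inl_inr] at h
      exact ((key x' j).mpr h).symm
    · intro h
      rw [(bipGraph m n _).adj_comm, bipGraph_adj_inl_inr]
      exact (key x' j).mp h.symm
  · simp only [Equiv.sumCongr_apply, Sum.map_inr]
    constructor
    · intro h; exact absurd h ((bipGraph_not_adj_same _).2 _ _)
    · intro h; exact absurd (hbip _ _ h) (by simp)
open Classical in
lemma main_bound {m n ℓ : ℕ} (hℓ : 1 ≤ ℓ) (hm : ℓ - 1 + 1 ≤ m)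
    (hn : m * (2 * ℓ + 2) + m + ℓ ≤ n)
    (G : SimpleGraph (Fin m ⊕ Fin n)) (hbip : IsBip G)
    (hfree : ¬ ContainsCopy G (linearForest fun _ : Fin ℓ => 3)) :
    G.edgeSet.ncard ≤ (ℓ - 1) * n + m - (ℓ - 1) ∧
    (G.edgeSet.ncard = (ℓ - 1) * n + m - (ℓ - 1) →
      Nonempty (G ≃g bipGraph m n fun a b =>
        (a : ℕ) < ℓ - 1 ∨ (b : ℕ) + (ℓ - 1) = (a : ℕ))) := by
  classical
  set p := ℓ - 1 with hp
  have hm1 : 1 ≤ m := le_trans (by omega) hm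
  have hn0 : 0 < n := by nlinarith
  have hsum := ncard_eq_sum_degL G hbip
  have hdegle : ∀ x : Fin m, degL G x ≤ n := by
    intro x
    have := Finset.card_filter_le (Finset.univ : Finset (Fin n))
      (fun j => G.Adj (inl x) (inr j))
    simpa [degL] using this
  have hsplit : ∑ x ∈ bigS G ℓ, degL G x + ∑ x ∈ (bigS G ℓ)ᶜ, degL G x
      = ∑ x : Fin m, degL G x := Finset.sum_add_sum_compl _ _
  have hcardS := bigS_card_le hn0 G ℓ hℓ hfree
  have hcompl_card : ((bigS G ℓ)ᶜ : Finset (Fin m)).card = m - (bigS G ℓ).card := by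
    rw [Finset.card_compl, Fintype.card_fin]
  have hS_le : ∑ x ∈ bigS G ℓ, degL G x ≤ (bigS G ℓ).card * n := by
    calc ∑ x ∈ bigS G ℓ, degL G x ≤ ∑ _x ∈ bigS G ℓ, n :=
          Finset.sum_le_sum fun x _ => hdegle x
      _ = (bigS G ℓ).card * n := by rw [Finset.sum_const, smul_eq_mul]
  by_cases hcase : (bigS G ℓ).card = p
  · -- structured case
    have hout := outside_deg_le hn0 G ℓ hℓ hfree (by rw [hcase])
    have hright := right_deg_le hn0 G ℓ hℓ hfree (by rw [hcase])
    have hSc_le : ∑ x ∈ (bigS G ℓ)ᶜ, degL G x ≤ m - p := by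
      calc ∑ x ∈ (bigS G ℓ)ᶜ, degL G x ≤ ∑ _x ∈ (bigS G ℓ)ᶜ, 1 :=
            Finset.sum_le_sum fun x hx => hout x (Finset.mem_compl.mp hx)
        _ = m - p := by rw [Finset.sum_const, smul_eq_mul, mul_one, hcompl_card, hcase]
    have hbound : G.edgeSet.ncard ≤ p * n + m - p := by
      rw [hsum, ← hsplit]
      have := hS_le
      rw [hcase] at this
      omega
    refine ⟨hbound, fun heq => ?_⟩
    -- extract exact values
    have hSsum : ∑ x ∈ bigS G ℓ, degL G x = p * n ∧
        ∑ x ∈ (bigS G ℓ)ᶜ, degL G x = m - p := by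
      rw [hsum, ← hsplit] at heq
      have := hS_le
      rw [hcase] at this
      omega
    have hfull : ∀ x ∈ bigS G ℓ, degL G x = n := by
      intro x hx
      by_contra hne
      have hlt : degL G x < n := lt_of_le_of_ne (hdegle x) hne
      have : ∑ x ∈ bigS G ℓ, degL G x < ∑ _x ∈ bigS G ℓ, n :=
        Finset.sum_lt_sum (fun x _ => hdegle x) ⟨x, hx, hlt⟩
      rw [Finset.sum_const, smul_eq_mul, hcase, hSsum.1] at this
      omega
    have hone : ∀ x ∈ (bigS G ℓ)ᶜ, degL G x = 1 := by
      intro x hx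
      by_contra hne
      have hlt : degL G x < 1 := by
        have := hout x (Finset.mem_compl.mp hx)
        omega
      have : ∑ x ∈ (bigS G ℓ)ᶜ, degL G x < ∑ _x ∈ (bigS G ℓ)ᶜ, 1 :=
        Finset.sum_lt_sum (fun x hx => hout x (Finset.mem_compl.mp hx)) ⟨x, hx, hlt⟩
      rw [Finset.sum_const, smul_eq_mul, mul_one, hcompl_card, hcase, hSsum.2] at this
      omega
    -- full adjacency for S vertices
    have hfull' : ∀ x ∈ bigS G ℓ, ∀ j, G.Adj (inl x) (inr j) := by
      intro x hx j
      have hcardeq : (Finset.univ.filter fun j => G.Adj (inl x) (inr j)).card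
          = Fintype.card (Fin n) := by
        rw [Fintype.card_fin]
        exact hfull x hx
      have huniv := Finset.eq_univ_of_card _ hcardeq
      have : j ∈ Finset.univ.filter fun j => G.Adj (inl x) (inr j) := by
        rw [huniv]; exact Finset.mem_univ j
      exact (Finset.mem_filter.mp this).2
    -- unique neighbor for non-S vertices
    have hone' : ∀ x, x ∉ bigS G ℓ → ∃ j0, ∀ j, G.Adj (inl x) (inr j) ↔ j = j0 := by
      intro x hx
      have h1 : (Finset.univ.filter fun j => G.Adj (inl x) (inr j)).card = 1 :=
        hone x (Finset.mem_compl.mpr hx)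
      obtain ⟨j0, hj0⟩ := Finset.card_eq_one.mp h1
      refine ⟨j0, fun j => ?_⟩
      constructor
      · intro h
        have : j ∈ Finset.univ.filter fun j => G.Adj (inl x) (inr j) := by
          rw [Finset.mem_filter]; exact ⟨Finset.mem_univ j, h⟩
        rw [hj0] at this
        exact Finset.mem_singleton.mp this
      · intro h
        have hmem : j0 ∈ Finset.univ.filter fun j => G.Adj (inl x) (inr j) := by
          rw [hj0]; exact Finset.mem_singleton_self j0
        rw [h]
        exact (Finset.mem_filter.mp hmem).2
    choose φaux hφaux using hone'
    let φ : Fin m → Fin n := fun x => if h : x ∉ bigS G ℓ then φaux x h else ⟨0, hn0⟩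
    have hφ1 : ∀ x, x ∉ bigS G ℓ → ∀ j, (G.Adj (inl x) (inr j) ↔ j = φ x) := by
      intro x hx j
      simp only [φ, dif_pos hx]
      exact hφaux x hx j
    have hφinj : ∀ x, x ∉ bigS G ℓ → ∀ x', x' ∉ bigS G ℓ → φ x = φ x' → x = x' := by
      intro x hx x' hx' h
      have hy := hright (φ x)
      have hx_mem : x ∈ Finset.univ.filter
          fun z => z ∉ bigS G ℓ ∧ G.Adj (inl z) (inr (φ x)) := by
        rw [Finset.mem_filter]
        exact ⟨Finset.mem_univ x, hx, (hφ1 x hx (φ x)).mpr rfl⟩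
      have hx'_mem : x' ∈ Finset.univ.filter
          fun z => z ∉ bigS G ℓ ∧ G.Adj (inl z) (inr (φ x)) := by
        rw [Finset.mem_filter]
        refine ⟨Finset.mem_univ x', hx', ?_⟩
        rw [h]
        exact (hφ1 x' hx' (φ x')).mpr rfl
      exact Finset.card_le_one.mp hy x hx_mem x' hx'_mem
    exact build_iso hℓ p hp (by omega) (by nlinarith) G hbip (bigS G ℓ) hcase
      hfull' φ hφ1 hφinj
  · -- few big vertices: strict inequality
    have hlt : (bigS G ℓ).card < p := lt_of_le_of_ne hcardS hcase
    have hp1 : 1 ≤ p := by omega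
    have hSc_le : ∑ x ∈ (bigS G ℓ)ᶜ, degL G x ≤ m * (2 * ℓ + 1) := by
      calc ∑ x ∈ (bigS G ℓ)ᶜ, degL G x ≤ ∑ _x ∈ (bigS G ℓ)ᶜ, (2 * ℓ + 1) := by
            refine Finset.sum_le_sum fun x hx => ?_
            have hxn : x ∉ bigS G ℓ := Finset.mem_compl.mp hx
            simp only [bigS, Finset.mem_filter, Finset.mem_univ, true_and, not_le] at hxn
            omega
        _ = ((bigS G ℓ)ᶜ).card * (2 * ℓ + 1) := by rw [Finset.sum_const, smul_eq_mul]
        _ ≤ m * (2 * ℓ + 1) := by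
            refine Nat.mul_le_mul_right _ ?_
            calc ((bigS G ℓ)ᶜ).card ≤ Fintype.card (Fin m) := Finset.card_le_univ _
              _ = m := Fintype.card_fin m
    have hS_le' : ∑ x ∈ bigS G ℓ, degL G x ≤ (p - 1) * n :=
      le_trans hS_le (Nat.mul_le_mul_right n (by omega))
    have he : G.edgeSet.ncard ≤ (p - 1) * n + m * (2 * ℓ + 1) := by
      rw [hsum, ← hsplit]
      omega
    have harith : (p - 1) * n + m * (2 * ℓ + 1) < p * n + m - p := by
      have h1 : p * n = (p - 1) * n + n := by
        conv_lhs => rw [show p = p - 1 + 1 by omega]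
        ring
      have h2 : m * (2 * ℓ + 2) = m * (2 * ℓ + 1) + m := by ring
      have h3 : p ≤ ℓ := by omega
      omega
    exact ⟨by omega, fun heq => absurd heq (by omega)⟩
open Classical in
lemma ext_count {m n : ℕ} (p : ℕ) (hpm : p + 1 ≤ m) (hmn : m - p ≤ n) :
    (bipGraph m n fun a b => (a : ℕ) < p ∨ (b : ℕ) + p = (a : ℕ)).edgeSet.ncard
      = p * n + m - p := by
  classical
  set G0 := bipGraph m n fun a b => (a : ℕ) < p ∨ (b : ℕ) + p = (a : ℕ) with hG0
  rw [ncard_eq_sum_degL G0 (bipGraph_isBip _)]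
  have hdeg : ∀ x : Fin m, degL G0 x = if (x : ℕ) < p then n else 1 := by
    intro x
    unfold degL
    by_cases hx : (x : ℕ) < p
    · rw [if_pos hx]
      have : (Finset.univ.filter fun j => G0.Adj (inl x) (inr j)) = Finset.univ := by
        refine Finset.eq_univ_of_forall fun j => ?_
        rw [Finset.mem_filter]
        exact ⟨Finset.mem_univ j, (bipGraph_adj_inl_inr _ x j).mpr (Or.inl hx)⟩
      rw [this, Finset.card_univ, Fintype.card_fin]
    · rw [if_neg hx]
      have hlt : (x : ℕ) - p < n := by
        have := x.isLt
        omega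
      have : (Finset.univ.filter fun j => G0.Adj (inl x) (inr j))
          = {(⟨(x : ℕ) - p, hlt⟩ : Fin n)} := by
        ext j
        rw [Finset.mem_filter, Finset.mem_singleton]
        constructor
        · rintro ⟨-, hadj⟩
          rcases (bipGraph_adj_inl_inr _ x j).mp hadj with h | h
          · exact absurd h hx
          · exact Fin.ext (by simp only [Fin.val_mk]; omega)
        · intro h
          refine ⟨Finset.mem_univ j, (bipGraph_adj_inl_inr _ x j).mpr (Or.inr ?_)⟩
          rw [h]
          simp only [Fin.val_mk]
          omega
      rw [this, Finset.card_singleton]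
  calc ∑ x : Fin m, degL G0 x = ∑ x : Fin m, if (x : ℕ) < p then n else 1 := by
        exact Finset.sum_congr rfl fun x _ => hdeg x
    _ = p * n + m - p := by
        rw [Finset.sum_ite, Finset.sum_const, Finset.sum_const, smul_eq_mul, smul_eq_mul,
          mul_one]
        have h1 : (Finset.univ.filter fun x : Fin m => (x : ℕ) < p)
            = Finset.image (Fin.castLE (by omega : p ≤ m)) Finset.univ := by
          ext a
          rw [Finset.mem_filter, Finset.mem_image]
          constructor
          · rintro ⟨-, h⟩
            exact ⟨⟨(a : ℕ), h⟩, Finset.mem_univ _, Fin.ext rfl⟩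
          · rintro ⟨b, -, rfl⟩
            exact ⟨Finset.mem_univ _, b.isLt.trans_le (by omega)⟩
        have h2 : (Finset.univ.filter fun x : Fin m => (x : ℕ) < p).card = p := by
          rw [h1, Finset.card_image_of_injective _ (Fin.castLE_injective _),
            Finset.card_univ, Fintype.card_fin]
        have h3 : (Finset.univ.filter fun x : Fin m => ¬ (x : ℕ) < p).card = m - p := by
          have h := Finset.card_filter_add_card_filter_not
            (s := (Finset.univ : Finset (Fin m))) (p := fun x : Fin m => (x : ℕ) < p)
          rw [Finset.card_univ, Fintype.card_fin] at h
          simp only [not_lt] at h ⊢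
          omega
        rw [h2, h3]
        omega

open Classical in
lemma ext_free {m n ℓ : ℕ} (hℓ : 1 ≤ ℓ) :
    ¬ ContainsCopy (bipGraph m n fun a b => (a : ℕ) < ℓ - 1 ∨ (b : ℕ) + (ℓ - 1) = (a : ℕ))
      (linearForest fun _ : Fin ℓ => 3) := by
  classical
  set p := ℓ - 1 with hp
  set G0 := bipGraph m n fun a b => (a : ℕ) < p ∨ (b : ℕ) + p = (a : ℕ) with hG0
  rintro ⟨f, hinj, hadj⟩
  have h01 : ∀ i : Fin ℓ, G0.Adj (f ⟨i, 1⟩) (f ⟨i, 0⟩) := by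
    intro i
    exact hadj ((linearForest_adj' _).2 ⟨rfl, Or.inr (by norm_num)⟩)
  have h12 : ∀ i : Fin ℓ, G0.Adj (f ⟨i, 1⟩) (f ⟨i, 2⟩) := by
    intro i
    exact hadj ((linearForest_adj' _).2 ⟨rfl, Or.inl (by norm_num)⟩)
  have claim : ∀ i : Fin ℓ, ∃ x : Fin m, (x : ℕ) < p ∧ ∃ j : Fin 3, f ⟨i, j⟩ = inl x := by
    intro i
    have hne02 : (⟨i, 0⟩ : (k : Fin ℓ) × Fin 3) ≠ ⟨i, 2⟩ := by
      intro h
      have := congrArg (fun q => (q.2 : ℕ)) h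
      simp at this
    cases hc : f ⟨i, 1⟩ with
    | inl a =>
      by_cases ha : (a : ℕ) < p
      · exact ⟨a, ha, 1, hc⟩
      · exfalso
        have hA0 := h01 i; rw [hc] at hA0
        have hA2 := h12 i; rw [hc] at hA2
        obtain ⟨b0, hb0⟩ : ∃ b0, f ⟨i, 0⟩ = inr b0 := by
          cases hf0 : f ⟨i, 0⟩ with
          | inl a0 => rw [hf0] at hA0; exact absurd hA0 ((bipGraph_not_adj_same _).1 _ _)
          | inr b0 => exact ⟨b0, rfl⟩
        obtain ⟨b2, hb2⟩ : ∃ b2, f ⟨i, 2⟩ = inr b2 := by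
          cases hf2 : f ⟨i, 2⟩ with
          | inl a2 => rw [hf2] at hA2; exact absurd hA2 ((bipGraph_not_adj_same _).1 _ _)
          | inr b2 => exact ⟨b2, rfl⟩
        rw [hb0] at hA0; rw [hb2] at hA2
        have r0 := (bipGraph_adj_inl_inr _ a b0).mp hA0
        have r2 := (bipGraph_adj_inl_inr _ a b2).mp hA2
        have : b0 = b2 := by
          rcases r0 with h | h
          · exact absurd h ha
          · rcases r2 with h' | h'
            · exact absurd h' ha
            · exact Fin.ext (by omega)
        apply hne02
        apply hinj
        rw [hb0, hb2, this]
    | inr b =>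
      have hA0 := h01 i; rw [hc] at hA0
      have hA2 := h12 i; rw [hc] at hA2
      obtain ⟨a0, ha0⟩ : ∃ a0, f ⟨i, 0⟩ = inl a0 := by
        cases hf0 : f ⟨i, 0⟩ with
        | inl a0 => exact ⟨a0, rfl⟩
        | inr b0 => rw [hf0] at hA0; exact absurd hA0 ((bipGraph_not_adj_same _).2 _ _)
      obtain ⟨a2, ha2⟩ : ∃ a2, f ⟨i, 2⟩ = inl a2 := by
        cases hf2 : f ⟨i, 2⟩ with
        | inl a2 => exact ⟨a2, rfl⟩
        | inr b2 => rw [hf2] at hA2; exact absurd hA2 ((bipGraph_not_adj_same _).2 _ _)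
      rw [ha0] at hA0; rw [ha2] at hA2
      have r0 := (bipGraph_adj_inl_inr _ a0 b).mp hA0.symm
      have r2 := (bipGraph_adj_inl_inr _ a2 b).mp hA2.symm
      by_cases ha : (a0 : ℕ) < p
      · exact ⟨a0, ha, 0, ha0⟩
      · by_cases ha' : (a2 : ℕ) < p
        · exact ⟨a2, ha', 2, ha2⟩
        · exfalso
          have : a0 = a2 := by
            rcases r0 with h | h
            · exact absurd h ha
            · rcases r2 with h' | h'
              · exact absurd h' ha'
              · exact Fin.ext (by omega)
          apply hne02
          apply hinj
          rw [ha0, ha2, this]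
  choose x hlt j hj using claim
  have hxinj : Function.Injective x := by
    intro i i' h
    have : f ⟨i, j i⟩ = f ⟨i', j i'⟩ := by rw [hj i, hj i', h]
    have := hinj this
    exact congrArg Sigma.fst this
  have : Fintype.card (Fin ℓ) ≤ Fintype.card (Fin p) :=
    Fintype.card_le_of_injective (fun i => (⟨(x i : ℕ), hlt i⟩ : Fin p)) (by
      intro i i' h
      simp only [Fin.mk.injEq] at h
      exact hxinj (Fin.ext h))
  rw [Fintype.card_fin, Fintype.card_fin] at this
  omega

end Aux

open Finset Sum in
theorem statement_4 (ℓ : ℕ) (hℓ : 1 ≤ ℓ) (p : ℕ) (hp : p = ℓ - 1)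
    (m : ℕ) (hm : p + 1 ≤ m) :
    ∃ N : ℕ, ∀ n : ℕ, N ≤ n →
      bipEx m n (linearForest (fun _ : Fin ℓ => 3)) = p * n + m - p ∧
      ∀ G : SimpleGraph (Fin m ⊕ Fin n), IsBip G →
        ¬ ContainsCopy G (linearForest (fun _ : Fin ℓ => 3)) →
        G.edgeSet.ncard = p * n + m - p →
        Nonempty (G ≃g bipGraph m n (fun a b => a.val < p ∨ b.val + p = a.val)) := by
  subst hp
  refine ⟨m * (2 * ℓ + 2) + m + ℓ, fun n hn => ?_⟩
  have hub : ∀ e ∈ {e | ∃ G : SimpleGraph (Fin m ⊕ Fin n),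
      IsBip G ∧ ¬ ContainsCopy G (linearForest fun _ : Fin ℓ => 3) ∧ G.edgeSet.ncard = e},
      e ≤ (ℓ - 1) * n + m - (ℓ - 1) := by
    rintro e ⟨G, hbip, hfree, rfl⟩
    exact (main_bound hℓ hm hn G hbip hfree).1
  have hmn : m - (ℓ - 1) ≤ n := by
    have h0 : 0 ≤ m * (2 * ℓ + 2) := Nat.zero_le _
    omega
  have hmem : (ℓ - 1) * n + m - (ℓ - 1) ∈ {e | ∃ G : SimpleGraph (Fin m ⊕ Fin n),
      IsBip G ∧ ¬ ContainsCopy G (linearForest fun _ : Fin ℓ => 3) ∧ G.edgeSet.ncard = e} :=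
    ⟨bipGraph m n fun a b => (a : ℕ) < ℓ - 1 ∨ (b : ℕ) + (ℓ - 1) = (a : ℕ),
      bipGraph_isBip _, ext_free hℓ, ext_count (ℓ - 1) hm hmn⟩
  constructor
  · apply le_antisymm
    · exact csSup_le ⟨_, hmem⟩ hub
    · exact le_csSup ⟨_, hub⟩ hmem
  · intro G hbip hfree hcount
    exact (main_bound hℓ hm hn G hbip hfree).2 hcount
end

section
/- Let p ≥ 3 be an integer and let n₁, m₁ be nonnegative integers with m₁ ≤ 2p. Then ex(n₁,m₁;P₇) ≤ p·n₁ + m₁, with equality if and only if n₁ = m₁ = 0, or m₁ = 2p and n₁ = 2. -/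
open SimpleGraph

open Classical in
noncomputable def degX {a b : ℕ} (r : Fin a → Fin b → Prop) (i : Fin a) : ℕ :=
  ∑ j, if r i j then 1 else 0

open Classical in
noncomputable def degY {a b : ℕ} (r : Fin a → Fin b → Prop) (j : Fin b) : ℕ :=
  ∑ i, if r i j then 1 else 0

noncomputable def cnt {a b : ℕ} (r : Fin a → Fin b → Prop) : ℕ := ∑ i, degX r i

lemma cnt_eq_sum_degY {a b : ℕ} (r : Fin a → Fin b → Prop) :
    cnt r = ∑ j, degY r j := Finset.sum_comm

lemma degX_le {a b : ℕ} (r : Fin a → Fin b → Prop) (i : Fin a) : degX r i ≤ b := by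
  classical
  calc degX r i ≤ ∑ _j : Fin b, 1 := Finset.sum_le_sum (fun j _ => by split <;> omega)
  _ = b := by simp

lemma degY_le {a b : ℕ} (r : Fin a → Fin b → Prop) (j : Fin b) : degY r j ≤ a := by
  classical
  calc degY r j ≤ ∑ _i : Fin a, 1 := Finset.sum_le_sum (fun i _ => by split <;> omega)
  _ = a := by simp

lemma cnt_le_mul {a b : ℕ} (r : Fin a → Fin b → Prop) : cnt r ≤ a * b := by
  calc cnt r ≤ ∑ _i : Fin a, b := Finset.sum_le_sum (fun i _ => degX_le r i)
  _ = a * b := by simp [Finset.sum_const, mul_comm]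

open Classical in
lemma exists_pick {m : ℕ} (p : Fin m → Prop) (t : Finset (Fin m))
    (h : t.card < ∑ j, if p j then 1 else 0) : ∃ j, p j ∧ j ∉ t := by
  by_contra hc
  push_neg at hc
  have hle : (∑ j, if p j then (1:ℕ) else 0) ≤ ∑ j, if j ∈ t then 1 else 0 := by
    refine Finset.sum_le_sum fun j _ => ?_
    by_cases hp : p j
    · simp [hp, hc j hp]
    · simp [hp]
  rw [Finset.sum_ite_mem, Finset.univ_inter, Finset.sum_const, smul_eq_mul, mul_one] at hle
  omega

open Classical in
lemma complete_of_cnt {a b : ℕ} (r : Fin a → Fin b → Prop) (h : cnt r = a * b) :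
    ∀ i j, r i j := by
  intro i0 j0
  by_contra hr
  have h1 : degX r i0 + 1 ≤ b := by
    have key : ∀ j : Fin b, (if r i0 j then (1:ℕ) else 0) + (if j = j0 then 1 else 0) ≤ 1 := by
      intro j
      by_cases hj : j = j0
      · subst hj; simp [hr]
      · simp [hj]; split <;> omega
    calc degX r i0 + 1 = ∑ j, ((if r i0 j then (1:ℕ) else 0) + (if j = j0 then 1 else 0)) := by
          rw [Finset.sum_add_distrib]; unfold degX; congr 1; simp
    _ ≤ ∑ _j : Fin b, 1 := Finset.sum_le_sum (fun j _ => key j)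
    _ = b := by simp
  have h2 : cnt r < a * b := by
    unfold cnt
    calc (∑ i, degX r i) < ∑ _i : Fin a, b :=
      Finset.sum_lt_sum (fun i _ => degX_le r i) ⟨i0, Finset.mem_univ _, by omega⟩
    _ = a * b := by simp [mul_comm]
  omega

lemma cnt_delY {a b : ℕ} (r : Fin a → Fin (b+1) → Prop) (j0 : Fin (b+1)) :
    cnt r = cnt (fun i j => r i (j0.succAbove j)) + degY r j0 := by
  rw [cnt_eq_sum_degY, cnt_eq_sum_degY, Fin.sum_univ_succAbove (fun j => degY r j) j0]
  have : ∀ j', degY (fun i j => r i (j0.succAbove j)) j' = degY r (j0.succAbove j') :=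
    fun _ => rfl
  simp only [this]
  omega

lemma cnt_delX {a b : ℕ} (r : Fin (a+1) → Fin b → Prop) (i0 : Fin (a+1)) :
    cnt r = cnt (fun i j => r (i0.succAbove i) j) + degX r i0 := by
  unfold cnt
  rw [Fin.sum_univ_succAbove (fun i => degX r i) i0]
  have : ∀ i', degX (fun i j => r (i0.succAbove i) j) i' = degX r (i0.succAbove i') :=
    fun _ => rfl
  simp only [this]
  omega

def patB {a b : ℕ} (r : Fin a → Fin b → Prop) : Prop :=
  ∃ x1 x2 x3 : Fin a, ∃ y1 y2 y3 y4 : Fin b,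
    x1 ≠ x2 ∧ x1 ≠ x3 ∧ x2 ≠ x3 ∧
    y1 ≠ y2 ∧ y1 ≠ y3 ∧ y1 ≠ y4 ∧ y2 ≠ y3 ∧ y2 ≠ y4 ∧ y3 ≠ y4 ∧
    r x1 y1 ∧ r x1 y2 ∧ r x2 y2 ∧ r x2 y3 ∧ r x3 y3 ∧ r x3 y4

lemma patB_delY {a b : ℕ} (r : Fin a → Fin (b+1) → Prop) (j0 : Fin (b+1))
    (h : patB (fun i j => r i (j0.succAbove j))) : patB r := by
  obtain ⟨x1,x2,x3,y1,y2,y3,y4,h1,h2,h3,h4,h5,h6,h7,h8,h9,e1,e2,e3,e4,e5,e6⟩ := h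
  exact ⟨x1,x2,x3, j0.succAbove y1, j0.succAbove y2, j0.succAbove y3, j0.succAbove y4,
    h1,h2,h3,
    Fin.succAbove_right_injective.ne h4, Fin.succAbove_right_injective.ne h5,
    Fin.succAbove_right_injective.ne h6, Fin.succAbove_right_injective.ne h7,
    Fin.succAbove_right_injective.ne h8, Fin.succAbove_right_injective.ne h9,
    e1,e2,e3,e4,e5,e6⟩

lemma patB_delX {a b : ℕ} (r : Fin (a+1) → Fin b → Prop) (i0 : Fin (a+1))
    (h : patB (fun i j => r (i0.succAbove i) j)) : patB r := by
  obtain ⟨x1,x2,x3,y1,y2,y3,y4,h1,h2,h3,h4,h5,h6,h7,h8,h9,e1,e2,e3,e4,e5,e6⟩ := h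
  exact ⟨i0.succAbove x1, i0.succAbove x2, i0.succAbove x3, y1,y2,y3,y4,
    Fin.succAbove_right_injective.ne h1, Fin.succAbove_right_injective.ne h2,
    Fin.succAbove_right_injective.ne h3,
    h4,h5,h6,h7,h8,h9, e1,e2,e3,e4,e5,e6⟩

open Classical in
lemma pick_X {a b : ℕ} (r : Fin a → Fin b → Prop) (i : Fin a) (t : Finset (Fin b))
    (h : t.card < degX r i) : ∃ j, r i j ∧ j ∉ t := exists_pick (fun j => r i j) t h

open Classical in
lemma pick_Y {a b : ℕ} (r : Fin a → Fin b → Prop) (j : Fin b) (t : Finset (Fin a))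
    (h : t.card < degY r j) : ∃ i, r i j ∧ i ∉ t := exists_pick (fun i => r i j) t h

lemma pick_any {m : ℕ} (t : Finset (Fin m)) (h : t.card < m) : ∃ j : Fin m, j ∉ t := by
  obtain ⟨j, -, hj⟩ := exists_pick (fun _ => True) t (by simpa using h)
  exact ⟨j, hj⟩

lemma card_pair_le {α : Type*} [DecidableEq α] (x y : α) : ({x, y} : Finset α).card ≤ 2 := by
  calc ({x, y} : Finset α).card ≤ ({y} : Finset α).card + 1 := Finset.card_insert_le _ _
  _ = 2 := by simp

lemma card_triple_le {α : Type*} [DecidableEq α] (x y z : α) :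
    ({x, y, z} : Finset α).card ≤ 3 := by
  calc ({x, y, z} : Finset α).card ≤ ({y, z} : Finset α).card + 1 := Finset.card_insert_le _ _
  _ ≤ 3 := by have := card_pair_le y z; omega

lemma keyL (q : ℕ) (hq : 3 ≤ q) :
    ∀ n a b, a + b = n → b ≤ 2*q → ∀ r : Fin a → Fin b → Prop, ¬ patB r →
      cnt r ≤ q*a + b ∧ (cnt r = q*a + b → (a = 0 ∧ b = 0) ∨ (b = 2*q ∧ a = 2)) := by
  intro n
  induction n using Nat.strong_induction_on with
  | _ n IH =>
  intro a b
  rcases b with _ | b'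
  · intro hab hb r hB
    have hc : cnt r = 0 := by simp [cnt, degX]
    refine ⟨by omega, fun h => Or.inl ⟨?_, rfl⟩⟩
    rcases Nat.mul_eq_zero.mp (by omega : q * a = 0) with h' | h' <;> omega
  · rcases a with _ | a'
    · intro hab hb r hB
      have hc : cnt r = 0 := by simp [cnt]
      exact ⟨by omega, fun h => by omega⟩
    · intro hab hb r hB
      by_cases hY : ∃ j, degY r j ≤ 1
      · -- delete a Y vertex with degree ≤ 1
        obtain ⟨j0, hj0⟩ := hY
        have hdel := cnt_delY r j0
        have hIH := IH ((a'+1) + b') (by omega) (a'+1) b' rfl (by omega) _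
          (fun hp => hB (patB_delY r j0 hp))
        refine ⟨by omega, fun heq => ?_⟩
        exfalso
        have h1 : cnt (fun i j => r i (j0.succAbove j)) = q * (a'+1) + b' := by
          have := hIH.1; omega
        rcases hIH.2 h1 with ⟨h2, h3⟩ | ⟨h2, h3⟩ <;> omega
      · push_neg at hY
        by_cases hX : ∃ i, degX r i ≤ q
        · -- delete an X vertex with degree ≤ q
          obtain ⟨i0, hi0⟩ := hX
          have hdel := cnt_delX r i0
          have hIH := IH (a' + (b'+1)) (by omega) a' (b'+1) rfl hb _
            (fun hp => hB (patB_delX r i0 hp))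
          have hq2 : q*(a'+1) = q*a' + q := by ring
          refine ⟨by omega, fun heq => ?_⟩
          exfalso
          have h1 : cnt (fun i j => r (i0.succAbove i) j) = q * a' + (b'+1) := by
            have := hIH.1; omega
          have hdeg : degX r i0 = q := by omega
          rcases hIH.2 h1 with ⟨h2, h3⟩ | ⟨h2, h3⟩
          · omega
          · subst h3
            have hcomp : ∀ i j, r (i0.succAbove i) j := by
              apply complete_of_cnt
              rw [h1]; omega
            obtain ⟨y1, hy1, -⟩ := pick_X r i0 ∅ (by simp; omega)
            obtain ⟨y2, hy2, hy2t⟩ := pick_X r i0 {y1} (by simp; omega)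
            obtain ⟨y3, hy3t⟩ := pick_any {y1, y2} (by have := card_pair_le y1 y2; omega)
            obtain ⟨y4, hy4t⟩ := pick_any {y1, y2, y3} (by have := card_triple_le y1 y2 y3; omega)
            simp only [Finset.mem_insert, Finset.mem_singleton, not_or] at hy2t hy3t hy4t
            apply hB
            refine ⟨i0.succAbove 0, i0, i0.succAbove 1, y3, y1, y2, y4,
              Fin.succAbove_ne i0 0, Fin.succAbove_right_injective.ne (by decide),
              (Fin.succAbove_ne i0 1).symm, ?_, ?_, ?_, ?_, ?_, ?_,
              hcomp 0 y3, hcomp 0 y1, hy1, hy2, hcomp 1 y2, hcomp 1 y4⟩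
            · exact hy3t.1
            · exact hy3t.2
            · exact fun h => hy4t.2.2 h.symm
            · exact fun h => hy2t h.symm
            · exact fun h => hy4t.1 h.symm
            · exact fun h => hy4t.2.1 h.symm
        · push_neg at hX
          -- min X-degree ≥ q+1 ≥ 4, min Y-degree ≥ 2; show all Y-degrees ≤ 2
          have hdeg2 : ∀ j, degY r j ≤ 2 := by
            intro j0
            by_contra hj
            push_neg at hj
            obtain ⟨x1, hx1, -⟩ := pick_Y r j0 ∅ (by simp; omega)
            obtain ⟨x2, hx2, hx2t⟩ := pick_Y r j0 {x1} (by simp; omega)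
            obtain ⟨x3, hx3, hx3t⟩ := pick_Y r j0 {x1, x2}
              (by have := card_pair_le x1 x2; omega)
            have hd1 := hX x1
            have hd2 := hX x2
            have hd3 := hX x3
            obtain ⟨y1, hy1, hy1t⟩ := pick_X r x1 {j0} (by simp; omega)
            obtain ⟨y2, hy2, hy2t⟩ := pick_X r x2 {j0, y1}
              (by have := card_pair_le j0 y1; omega)
            obtain ⟨y3, hy3, hy3t⟩ := pick_X r x3 {j0, y1, y2}
              (by have := card_triple_le j0 y1 y2; omega)
            have hyd := hY y1
            obtain ⟨u, hu, hut⟩ := pick_Y r y1 {x1} (by simp; omega)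
            simp only [Finset.mem_insert, Finset.mem_singleton, not_or] at hx2t hx3t hy1t hy2t hy3t hut
            by_cases hc2 : u = x2
            · subst hc2
              exact hB ⟨x3, x1, u, y3, j0, y1, y2,
                hx3t.1, hx3t.2, fun h => hx2t h.symm,
                hy3t.1, hy3t.2.1, hy3t.2.2,
                fun h => hy1t h.symm, fun h => hy2t.1 h.symm, fun h => hy2t.2 h.symm,
                hy3, hx3, hx1, hy1, hu, hy2⟩
            by_cases hc3 : u = x3
            · subst hc3
              exact hB ⟨x2, x1, u, y2, j0, y1, y3,
                hx2t, fun h => hx3t.2 h.symm, fun h => hx3t.1 h.symm,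
                hy2t.1, hy2t.2, fun h => hy3t.2.2 h.symm,
                fun h => hy1t h.symm, fun h => hy3t.1 h.symm, fun h => hy3t.2.1 h.symm,
                hy2, hx2, hx1, hy1, hu, hy3⟩
            · have hdu := hX u
              obtain ⟨y', hy', hy't⟩ := pick_X r u {y1, j0, y2}
                (by have := card_triple_le y1 j0 y2; omega)
              simp only [Finset.mem_insert, Finset.mem_singleton, not_or] at hy't
              exact hB ⟨u, x1, x2, y', y1, j0, y2,
                hut, hc2, fun h => hx2t h.symm,
                hy't.1, hy't.2.1, hy't.2.2,
                hy1t, fun h => hy2t.2 h.symm, fun h => hy2t.1 h.symm,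
                hy', hu, hy1, hx1, hx2, hy2⟩
          have hcnt2b : cnt r ≤ 2 * (b'+1) := by
            rw [cnt_eq_sum_degY]
            calc (∑ j, degY r j) ≤ ∑ _j : Fin (b'+1), 2 :=
              Finset.sum_le_sum (fun j _ => hdeg2 j)
            _ = 2 * (b'+1) := by simp [mul_comm]
          have hbq : q < b' + 1 := by
            have h5 := hX ⟨0, by omega⟩
            have h6 := degX_le r ⟨0, by omega⟩
            omega
          have hcnt_ab : cnt r ≤ (a'+1) * (b'+1) := cnt_le_mul r
          rcases Nat.lt_or_ge a' 2 with ha2 | ha3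
          · interval_cases a'
            · have e1 : q * 1 = q := by ring
              have e2 : (0+1) * (b'+1) = b'+1 := by ring
              exact ⟨by omega, fun h => by omega⟩
            · have e1 : q * 2 = 2*q := by ring
              exact ⟨by omega, fun h => Or.inr ⟨by omega, rfl⟩⟩
          · have h3q : 3*q ≤ q*(a'+1) := by
              calc 3*q = q*3 := by ring
              _ ≤ q*(a'+1) := Nat.mul_le_mul_left q (by omega)
            exact ⟨by omega, fun h => by omega⟩

open Classical in
lemma cnt_eq_ncard {a b : ℕ} (r : Fin a → Fin b → Prop) :
    cnt r = {p : Fin a × Fin b | r p.1 p.2}.ncard := by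
  classical
  rw [Set.ncard_eq_toFinset_card', Set.toFinset_setOf, Finset.card_filter,
    Fintype.sum_prod_type]
  simp [cnt, degX]

lemma ncard_edgeSet_eq_cnt {a b : ℕ} (G : SimpleGraph (Fin a ⊕ Fin b)) (hbip : IsBip G) :
    G.edgeSet.ncard = cnt (fun i j => G.Adj (Sum.inl i) (Sum.inr j)) := by
  classical
  have hinj : Function.Injective (fun p : Fin a × Fin b => s(Sum.inl p.1, Sum.inr p.2)) := by
    intro p q h
    rw [Sym2.eq_iff] at h
    rcases h with ⟨h1, h2⟩ | ⟨h1, h2⟩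
    · exact Prod.ext (Sum.inl.inj h1) (Sum.inr.inj h2)
    · exact absurd h1 (by simp)
  have himg : (fun p : Fin a × Fin b => s(Sum.inl p.1, Sum.inr p.2)) ''
      {p : Fin a × Fin b | G.Adj (Sum.inl p.1) (Sum.inr p.2)} = G.edgeSet := by
    ext e
    induction e with
    | _ u v =>
      simp only [Set.mem_image, Set.mem_setOf_eq, SimpleGraph.mem_edgeSet]
      constructor
      · rintro ⟨⟨i, j⟩, hadj, hE⟩
        rw [Sym2.eq_iff] at hE
        rcases hE with ⟨rfl, rfl⟩ | ⟨rfl, rfl⟩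
        · exact hadj
        · exact hadj.symm
      · intro he
        rcases u with i | j <;> rcases v with i' | j'
        · exact absurd (hbip _ _ he) (by simp)
        · exact ⟨(i, j'), he, rfl⟩
        · exact ⟨(i', j), he.symm, Sym2.eq_swap⟩
        · exact absurd (hbip _ _ he) (by simp)
  rw [← himg, Set.ncard_image_of_injective _ hinj]
  exact (cnt_eq_ncard (fun i j => G.Adj (Sum.inl i) (Sum.inr j))).symm

lemma patB_containsCopy {a b : ℕ} (G : SimpleGraph (Fin a ⊕ Fin b))
    (h : patB (fun i j => G.Adj (Sum.inl i) (Sum.inr j))) : ContainsCopy G (pathG 7) := by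
  obtain ⟨x1,x2,x3,y1,y2,y3,y4,hx12,hx13,hx23,hy12,hy13,hy14,hy23,hy24,hy34,
    e11,e12,e22,e23,e33,e34⟩ := h
  refine ⟨![Sum.inr y1, Sum.inl x1, Sum.inr y2, Sum.inl x2, Sum.inr y3, Sum.inl x3, Sum.inr y4],
    ?_, ?_⟩
  · intro u v huv
    fin_cases u <;> fin_cases v <;>
      first
        | rfl
        | exact Sum.noConfusion rfl rfl (heq_of_eq huv)
        | exact Sum.noConfusion rfl rfl (heq_of_eq huv) fun hh => absurd (eq_of_heq hh) hx12
        | exact Sum.noConfusion rfl rfl (heq_of_eq huv) fun hh => absurd (eq_of_heq hh).symm hx12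
        | exact Sum.noConfusion rfl rfl (heq_of_eq huv) fun hh => absurd (eq_of_heq hh) hx13
        | exact Sum.noConfusion rfl rfl (heq_of_eq huv) fun hh => absurd (eq_of_heq hh).symm hx13
        | exact Sum.noConfusion rfl rfl (heq_of_eq huv) fun hh => absurd (eq_of_heq hh) hx23
        | exact Sum.noConfusion rfl rfl (heq_of_eq huv) fun hh => absurd (eq_of_heq hh).symm hx23
        | exact Sum.noConfusion rfl rfl (heq_of_eq huv) fun hh => absurd (eq_of_heq hh) hy12
        | exact Sum.noConfusion rfl rfl (heq_of_eq huv) fun hh => absurd (eq_of_heq hh).symm hy12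
        | exact Sum.noConfusion rfl rfl (heq_of_eq huv) fun hh => absurd (eq_of_heq hh) hy13
        | exact Sum.noConfusion rfl rfl (heq_of_eq huv) fun hh => absurd (eq_of_heq hh).symm hy13
        | exact Sum.noConfusion rfl rfl (heq_of_eq huv) fun hh => absurd (eq_of_heq hh) hy14
        | exact Sum.noConfusion rfl rfl (heq_of_eq huv) fun hh => absurd (eq_of_heq hh).symm hy14
        | exact Sum.noConfusion rfl rfl (heq_of_eq huv) fun hh => absurd (eq_of_heq hh) hy23
        | exact Sum.noConfusion rfl rfl (heq_of_eq huv) fun hh => absurd (eq_of_heq hh).symm hy23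
        | exact Sum.noConfusion rfl rfl (heq_of_eq huv) fun hh => absurd (eq_of_heq hh) hy24
        | exact Sum.noConfusion rfl rfl (heq_of_eq huv) fun hh => absurd (eq_of_heq hh).symm hy24
        | exact Sum.noConfusion rfl rfl (heq_of_eq huv) fun hh => absurd (eq_of_heq hh) hy34
        | exact Sum.noConfusion rfl rfl (heq_of_eq huv) fun hh => absurd (eq_of_heq hh).symm hy34
  · intro u v huv
    have huv' : u.val + 1 = v.val ∨ v.val + 1 = u.val := huv
    clear huv
    fin_cases u <;> fin_cases v <;>
      first
        | exact absurd huv' (by decide)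
        | exact e11.symm | exact e11 | exact e12 | exact e12.symm
        | exact e22.symm | exact e22 | exact e23 | exact e23.symm
        | exact e33.symm | exact e33 | exact e34 | exact e34.symm


lemma isBip_bipGraph (m n : ℕ) (r : Fin m → Fin n → Prop) : IsBip (bipGraph m n r) := by
  rintro u v (⟨i, j, hr, rfl, rfl⟩ | ⟨i, j, hr, rfl, rfl⟩) <;> simp

lemma adj_bipGraph_top (m n : ℕ) (i : Fin m) (j : Fin n) :
    (bipGraph m n fun _ _ => True).Adj (Sum.inl i) (Sum.inr j) :=
  Or.inl ⟨i, j, trivial, rfl, rfl⟩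

lemma cnt_all {a b : ℕ} {r : Fin a → Fin b → Prop} (h : ∀ i j, r i j) : cnt r = a * b := by
  have hd : ∀ i, degX r i = b := by
    intro i
    unfold degX
    simp [h]
  unfold cnt
  simp [hd, mul_comm]

lemma no_copy_K (m : ℕ) : ¬ ContainsCopy (bipGraph 2 m fun _ _ => True) (pathG 7) := by
  rintro ⟨f, hinj, hf⟩
  set G := bipGraph 2 m fun _ _ => True with hG
  have opp1 : ∀ (i : Fin 2) u, G.Adj (Sum.inl i) u → ∃ j, u = Sum.inr j := by
    rintro i u (⟨i', j', -, hE, rfl⟩ | ⟨i', j', -, hE, rfl⟩)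
    · exact ⟨j', rfl⟩
    · exact absurd hE (by simp)
  have opp2 : ∀ (j : Fin m) u, G.Adj (Sum.inr j) u → ∃ i, u = Sum.inl i := by
    rintro j u (⟨i', j', -, hE, rfl⟩ | ⟨i', j', -, hE, rfl⟩)
    · exact absurd hE (by simp)
    · exact ⟨i', rfl⟩
  have h01 : G.Adj (f 0) (f 1) := hf (a := 0) (b := 1) (Or.inl rfl)
  have h12 : G.Adj (f 1) (f 2) := hf (a := 1) (b := 2) (Or.inl rfl)
  have h23 : G.Adj (f 2) (f 3) := hf (a := 2) (b := 3) (Or.inl rfl)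
  have h34 : G.Adj (f 3) (f 4) := hf (a := 3) (b := 4) (Or.inl rfl)
  have h45 : G.Adj (f 4) (f 5) := hf (a := 4) (b := 5) (Or.inl rfl)
  have dist : ∀ (k l : Fin 7), k ≠ l → f k ≠ f l := fun k l h hh => h (hinj hh)
  rcases h0 : f 0 with i0 | j0
  · rw [h0] at h01
    obtain ⟨j1, h1⟩ := opp1 i0 _ h01
    rw [h1] at h12
    obtain ⟨i2, h2⟩ := opp2 j1 _ h12
    rw [h2] at h23
    obtain ⟨j3, h3⟩ := opp1 i2 _ h23
    rw [h3] at h34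
    obtain ⟨i4, h4⟩ := opp2 j3 _ h34
    have d1 : i0 ≠ i2 := fun h => dist 0 2 (by decide) (by rw [h0, h2, h])
    have d2 : i0 ≠ i4 := fun h => dist 0 4 (by decide) (by rw [h0, h4, h])
    have d3 : i2 ≠ i4 := fun h => dist 2 4 (by decide) (by rw [h2, h4, h])
    have e1 : i0.val ≠ i2.val := fun hh => d1 (Fin.ext hh)
    have e2 : i0.val ≠ i4.val := fun hh => d2 (Fin.ext hh)
    have e3 : i2.val ≠ i4.val := fun hh => d3 (Fin.ext hh)
    have l0 := i0.isLt
    have l2 := i2.isLt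
    have l4 := i4.isLt
    omega
  · rw [h0] at h01
    obtain ⟨i1, h1⟩ := opp2 j0 _ h01
    rw [h1] at h12
    obtain ⟨j2, h2⟩ := opp1 i1 _ h12
    rw [h2] at h23
    obtain ⟨i3, h3⟩ := opp2 j2 _ h23
    rw [h3] at h34
    obtain ⟨j4, h4⟩ := opp1 i3 _ h34
    rw [h4] at h45
    obtain ⟨i5, h5⟩ := opp2 j4 _ h45
    have d1 : i1 ≠ i3 := fun h => dist 1 3 (by decide) (by rw [h1, h3, h])
    have d2 : i1 ≠ i5 := fun h => dist 1 5 (by decide) (by rw [h1, h5, h])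
    have d3 : i3 ≠ i5 := fun h => dist 3 5 (by decide) (by rw [h3, h5, h])
    have e1 : i1.val ≠ i3.val := fun hh => d1 (Fin.ext hh)
    have e2 : i1.val ≠ i5.val := fun hh => d2 (Fin.ext hh)
    have e3 : i3.val ≠ i5.val := fun hh => d3 (Fin.ext hh)
    have l1 := i1.isLt
    have l3 := i3.isLt
    have l5 := i5.isLt
    omega

theorem statement_11 (p n₁ m₁ : ℕ) (hp : 3 ≤ p) (hm : m₁ ≤ 2 * p) :
    bipEx n₁ m₁ (pathG 7) ≤ p * n₁ + m₁ ∧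
    (bipEx n₁ m₁ (pathG 7) = p * n₁ + m₁ ↔
      (n₁ = 0 ∧ m₁ = 0) ∨ (m₁ = 2 * p ∧ n₁ = 2)) := by
  classical
  have hne : {e | ∃ G : SimpleGraph (Fin n₁ ⊕ Fin m₁),
      IsBip G ∧ ¬ ContainsCopy G (pathG 7) ∧ G.edgeSet.ncard = e}.Nonempty := by
    refine ⟨0, ⊥, ?_, ?_, ?_⟩
    · intro a b hab
      exact absurd hab (by simp)
    · rintro ⟨f, hinj, hffn⟩
      simpa using hffn (a := 0) (b := 1) (Or.inl rfl)
    · simp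
  have hbound : ∀ e ∈ {e | ∃ G : SimpleGraph (Fin n₁ ⊕ Fin m₁),
      IsBip G ∧ ¬ ContainsCopy G (pathG 7) ∧ G.edgeSet.ncard = e}, e ≤ p * n₁ + m₁ := by
    rintro e ⟨G, hbip, hnc, rfl⟩
    rw [ncard_edgeSet_eq_cnt G hbip]
    exact (keyL p hp (n₁ + m₁) n₁ m₁ rfl hm _
      (fun hB => hnc (patB_containsCopy G hB))).1
  have hsup_le : bipEx n₁ m₁ (pathG 7) ≤ p * n₁ + m₁ := csSup_le hne hbound
  refine ⟨hsup_le, ?_, ?_⟩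
  · intro heq
    have hmem := Nat.sSup_mem hne ⟨_, hbound⟩
    rw [show sSup {e | ∃ G : SimpleGraph (Fin n₁ ⊕ Fin m₁),
      IsBip G ∧ ¬ ContainsCopy G (pathG 7) ∧ G.edgeSet.ncard = e} = bipEx n₁ m₁ (pathG 7)
      from rfl, heq] at hmem
    obtain ⟨G, hbip, hnc, hcard⟩ := hmem
    apply (keyL p hp (n₁ + m₁) n₁ m₁ rfl hm _
      (fun hB => hnc (patB_containsCopy G hB))).2
    rw [← ncard_edgeSet_eq_cnt G hbip, hcard]
  · rintro (⟨h1, h2⟩ | ⟨h1, h2⟩)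
    · subst h1
      subst h2
      have h := csSup_le hne hbound
      have h0 : bipEx 0 0 (pathG 7) ≤ p * 0 + 0 := h
      omega
    · subst h1
      subst h2
      set G := bipGraph 2 (2 * p) fun _ _ => True with hGdef
      have hbipG := isBip_bipGraph 2 (2 * p) (fun _ _ => True)
      have hcc := no_copy_K (2 * p)
      have hcnt : G.edgeSet.ncard = p * 2 + 2 * p := by
        rw [ncard_edgeSet_eq_cnt G hbipG]
        have hca : cnt (fun i j => G.Adj (Sum.inl i) (Sum.inr j)) = 2 * (2 * p) :=
          cnt_all (fun i j => adj_bipGraph_top 2 (2 * p) i j)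
        rw [hca]
        ring
      have hmem : p * 2 + 2 * p ∈ {e | ∃ G : SimpleGraph (Fin 2 ⊕ Fin (2 * p)),
          IsBip G ∧ ¬ ContainsCopy G (pathG 7) ∧ G.edgeSet.ncard = e} := ⟨G, hbipG, hcc, hcnt⟩
    
      exact le_antisymm hsup_le (le_csSup ⟨_, hbound⟩ hmem)
end

section
/- Let p ≥ 3 and m ≥ 3p+1 be integers, and let n₁, m₁ be nonnegative integers with m₁ ≤ m − p. Then ex(n₁,m₁;P₇) ≤ p·(n₁ − 2) + m − p + m₁, with equality if and only if n₁ = 2 and m₁ = m − p. -/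
open SimpleGraph

set_option linter.unusedSectionVars false

namespace BipP7

variable {α β : Type*} [DecidableEq α] [DecidableEq β]

def P7L (E : Finset (α × β)) : Prop :=
  ∃ x1 x2 x3 x4 : α, ∃ y1 y2 y3 : β,
    x1 ≠ x2 ∧ x1 ≠ x3 ∧ x1 ≠ x4 ∧ x2 ≠ x3 ∧ x2 ≠ x4 ∧ x3 ≠ x4 ∧
    y1 ≠ y2 ∧ y1 ≠ y3 ∧ y2 ≠ y3 ∧
    (x1, y1) ∈ E ∧ (x2, y1) ∈ E ∧ (x2, y2) ∈ E ∧ (x3, y2) ∈ E ∧ (x3, y3) ∈ E ∧ (x4, y3) ∈ E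

def swapE (E : Finset (α × β)) : Finset (β × α) := E.image Prod.swap

@[simp] lemma mem_swapE {E : Finset (α × β)} {y : β} {x : α} :
    (y, x) ∈ swapE E ↔ (x, y) ∈ E := by
  constructor
  · rintro h
    rw [swapE, Finset.mem_image] at h
    obtain ⟨⟨a, b⟩, hab, he⟩ := h
    simp only [Prod.swap_prod_mk, Prod.mk.injEq] at he
    obtain ⟨rfl, rfl⟩ := he
    exact hab
  · intro h
    rw [swapE, Finset.mem_image]
    exact ⟨(x, y), h, rfl⟩

@[simp] lemma swapE_swapE (E : Finset (α × β)) : swapE (swapE E) = E := by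
  ext ⟨x, y⟩
  exact ⟨fun h => mem_swapE.1 (mem_swapE.1 h), fun h => mem_swapE.2 (mem_swapE.2 h)⟩

lemma card_swapE (E : Finset (α × β)) : (swapE E).card = E.card :=
  Finset.card_image_of_injective _ Prod.swap_injective

lemma P7L_mono {E F : Finset (α × β)} (h : E ⊆ F) (hp : P7L E) : P7L F := by
  obtain ⟨x1, x2, x3, x4, y1, y2, y3, d1, d2, d3, d4, d5, d6, d7, d8, d9,
    e1, e2, e3, e4, e5, e6⟩ := hp
  exact ⟨x1, x2, x3, x4, y1, y2, y3, d1, d2, d3, d4, d5, d6, d7, d8, d9,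
    h e1, h e2, h e3, h e4, h e5, h e6⟩

lemma swapE_mono {E F : Finset (α × β)} (h : E ⊆ F) : swapE E ⊆ swapE F :=
  Finset.image_subset_image h

def nbrL (E : Finset (α × β)) (x : α) : Finset β :=
  (E.filter fun p => p.1 = x).image Prod.snd

@[simp] lemma mem_nbrL {E : Finset (α × β)} {x : α} {y : β} :
    y ∈ nbrL E x ↔ (x, y) ∈ E := by
  rw [nbrL, Finset.mem_image]
  constructor
  · rintro ⟨⟨a, b⟩, hab, rfl⟩
    rw [Finset.mem_filter] at hab
    obtain ⟨h1, h2⟩ := hab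
    simp only at h2
    subst h2; exact h1
  · intro h
    exact ⟨(x, y), Finset.mem_filter.2 ⟨h, rfl⟩, rfl⟩

def degL (E : Finset (α × β)) (x : α) : ℕ := (E.filter fun p => p.1 = x).card

lemma card_nbrL (E : Finset (α × β)) (x : α) :
    (nbrL E x).card = degL E x := by
  rw [nbrL, degL]
  apply Finset.card_image_of_injOn
  intro p hp q hq hpq
  rw [Finset.mem_coe, Finset.mem_filter] at hp hq
  exact Prod.ext (hp.2.trans hq.2.symm) hpq

lemma swapE_filter (E : Finset (α × β)) (y : β) :
    swapE (E.filter fun p => p.2 = y) = (swapE E).filter fun q => q.1 = y := by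
  ext ⟨b, a⟩
  simp

lemma degL_swapE (E : Finset (α × β)) (y : β) :
    degL (swapE E) y = (E.filter fun p => p.2 = y).card := by
  rw [degL, ← swapE_filter, card_swapE]

lemma pick3 {γ : Type*} [DecidableEq γ] {s : Finset γ} (h : 3 ≤ s.card) (a b : γ) :
    ∃ c ∈ s, c ≠ a ∧ c ≠ b := by
  have h2 : ({a, b} : Finset γ).card ≤ 2 := Finset.card_insert_le _ _ |>.trans (by simp)
  have h3 := Finset.le_card_sdiff ({a, b} : Finset γ) s
  obtain ⟨c, hc⟩ := Finset.card_pos.1 (show 0 < (s \ {a, b}).card by omega)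
  rw [Finset.mem_sdiff] at hc
  refine ⟨c, hc.1, ?_, ?_⟩ <;> intro hh <;> apply hc.2 <;> simp [hh]

lemma exL {E : Finset (α × β)} {x : α} (h : 3 ≤ degL E x) (a b : β) :
    ∃ y, y ≠ a ∧ y ≠ b ∧ (x, y) ∈ E := by
  have hc : 3 ≤ (nbrL E x).card := by rw [card_nbrL]; exact h
  obtain ⟨y, hy, h1, h2⟩ := pick3 hc a b
  exact ⟨y, h1, h2, mem_nbrL.1 hy⟩


lemma core : ∀ (n : ℕ) (α β : Type) [DecidableEq α] [DecidableEq β]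
    (A : Finset α) (B : Finset β) (E : Finset (α × β)),
    A.card + B.card ≤ n →
    (∀ p ∈ E, p.1 ∈ A ∧ p.2 ∈ B) →
    ¬ P7L E → ¬ P7L (swapE E) → E.Nonempty →
    E.card + 3 ≤ 2 * A.card + 2 * B.card := by
  intro n
  induction n with
  | zero =>
      intro α β _ _ A B E hn hsupp _ _ hne
      obtain ⟨p, hp⟩ := hne
      have h1 := (hsupp p hp).1
      have hA : A = ∅ := Finset.card_eq_zero.1 (by omega)
      rw [hA] at h1
      exact absurd h1 (Finset.notMem_empty _)
  | succ n IH =>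
      intro α β _ _ A B E hn hsupp hP1 hP2 hne
      have delCase : ∀ (α β : Type) [DecidableEq α] [DecidableEq β]
          (A : Finset α) (B : Finset β) (E : Finset (α × β)),
          A.card + B.card ≤ n + 1 →
          (∀ p ∈ E, p.1 ∈ A ∧ p.2 ∈ B) →
          ¬ P7L E → ¬ P7L (swapE E) → E.Nonempty →
          (∃ x ∈ A, degL E x ≤ 2) →
          E.card + 3 ≤ 2 * A.card + 2 * B.card := by
        clear hsupp hP1 hP2 hne hn
        intro α β _ _ A B E hn hsupp hP1 hP2 hne hx
        obtain ⟨x, hxA, hdeg⟩ := hx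
        have hsplit := Finset.card_filter_add_card_filter_not
          (s := E) (p := fun p => p.1 = x)
        set E' := E.filter (fun p => ¬ (p.1 = x)) with hE'def
        have hAcard : 1 ≤ A.card := Finset.card_pos.2 ⟨x, hxA⟩
        have hBcard : 1 ≤ B.card := by
          obtain ⟨p, hp⟩ := hne
          exact Finset.card_pos.2 ⟨p.2, (hsupp p hp).2⟩
        by_cases hE' : E'.Nonempty
        · have hsub : E' ⊆ E := Finset.filter_subset _ _
          have hres := IH α β (A.erase x) B E'
            (by rw [Finset.card_erase_of_mem hxA]; omega)
            (fun p hp => by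
              have hmem := Finset.mem_filter.1 hp
              exact ⟨Finset.mem_erase.2 ⟨hmem.2, (hsupp p hmem.1).1⟩, (hsupp p hmem.1).2⟩)
            (fun h => hP1 (P7L_mono hsub h))
            (fun h => hP2 (P7L_mono (swapE_mono hsub) h))
            hE'
          rw [Finset.card_erase_of_mem hxA] at hres
          have : degL E x + E'.card = E.card := hsplit
          omega
        · rw [Finset.not_nonempty_iff_eq_empty] at hE'
          have hcard : E.card = degL E x := by
            rw [hE'] at hsplit
            simpa [degL] using hsplit.symm
          have hEB : E.card ≤ B.card := by
            rw [hcard, ← card_nbrL]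
            exact Finset.card_le_card (fun y hy => (hsupp _ (mem_nbrL.1 hy)).2)
          omega
      by_cases hA3 : ∃ x ∈ A, degL E x ≤ 2
      · exact delCase α β A B E hn hsupp hP1 hP2 hne hA3
      by_cases hB3 : ∃ y ∈ B, degL (swapE E) y ≤ 2
      · have hres := delCase β α B A (swapE E) (by omega)
          (fun q hq => by
            obtain ⟨v, u⟩ := q
            have := hsupp _ (mem_swapE.1 hq)
            exact ⟨this.2, this.1⟩)
          hP2
          (by rw [swapE_swapE]; exact hP1)
          (by
            obtain ⟨p, hp⟩ := hne
            exact ⟨(p.2, p.1), mem_swapE.2 hp⟩)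
          hB3
        rw [card_swapE] at hres
        omega
      · push_neg at hA3 hB3
        replace hA3 : ∀ x ∈ A, 3 ≤ degL E x := fun x hx => hA3 x hx
        replace hB3 : ∀ y ∈ B, 3 ≤ degL (swapE E) y := fun y hy => hB3 y hy
        obtain ⟨⟨x1, y1⟩, he1⟩ := hne
        have hx1A := (hsupp _ he1).1
        have hy1B := (hsupp _ he1).2
        obtain ⟨x2, hx2ne1, -, he2'⟩ := exL (hB3 y1 hy1B) x1 x1
        have he2 : (x2, y1) ∈ E := mem_swapE.1 he2'
        have hx2A := (hsupp _ he2).1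
        obtain ⟨y2, hy2ne1, -, he3⟩ := exL (hA3 x2 hx2A) y1 y1
        have hy2B := (hsupp _ he3).2
        obtain ⟨x3, hx3ne1, hx3ne2, he4'⟩ := exL (hB3 y2 hy2B) x1 x2
        have he4 : (x3, y2) ∈ E := mem_swapE.1 he4'
        have hx3A := (hsupp _ he4).1
        obtain ⟨y3, hy3ne1, hy3ne2, he5⟩ := exL (hA3 x3 hx3A) y1 y2
        have hy3B := (hsupp _ he5).2
        -- neighborhood confinements
        have conf_x1 : ∀ y', (x1, y') ∈ E → y' = y1 ∨ y' = y2 ∨ y' = y3 := by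
          intro y' hy'
          by_contra hc
          push_neg at hc
          obtain ⟨m1, m2, m3⟩ := hc
          exact hP2 ⟨y', y1, y2, y3, x1, x2, x3, m1, m2, m3,
            hy2ne1.symm, hy3ne1.symm, hy3ne2.symm,
            hx2ne1.symm, hx3ne1.symm, hx3ne2.symm,
            mem_swapE.2 hy', mem_swapE.2 he1, mem_swapE.2 he2, mem_swapE.2 he3,
            mem_swapE.2 he4, mem_swapE.2 he5⟩
        have eq_x1 : nbrL E x1 = {y1, y2, y3} := by
          apply Finset.eq_of_subset_of_card_le
          · intro y hy
            rcases conf_x1 y (mem_nbrL.1 hy) with rfl | rfl | rfl <;> simp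
          · have h3 : ({y1, y2, y3} : Finset β).card = 3 :=
              Finset.card_eq_three.2 ⟨y1, y2, y3, hy2ne1.symm, hy3ne1.symm, hy3ne2.symm, rfl⟩
            rw [h3, card_nbrL]
            exact hA3 x1 hx1A
        have he_x1y2 : (x1, y2) ∈ E := mem_nbrL.1 (by rw [eq_x1]; simp)
        have he_x1y3 : (x1, y3) ∈ E := mem_nbrL.1 (by rw [eq_x1]; simp)
        have conf_y3 : ∀ x', (x', y3) ∈ E → x' = x1 ∨ x' = x2 ∨ x' = x3 := by
          intro x' hx'
          by_contra hc
          push_neg at hc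
          obtain ⟨m1, m2, m3⟩ := hc
          exact hP1 ⟨x1, x2, x3, x', y1, y2, y3, hx2ne1.symm, hx3ne1.symm, m1.symm,
            hx3ne2.symm, m2.symm, m3.symm,
            hy2ne1.symm, hy3ne1.symm, hy3ne2.symm,
            he1, he2, he3, he4, he5, hx'⟩
        have eq_y3 : nbrL (swapE E) y3 = {x1, x2, x3} := by
          apply Finset.eq_of_subset_of_card_le
          · intro x' hx'
            rcases conf_y3 x' (mem_swapE.1 (mem_nbrL.1 hx')) with rfl | rfl | rfl <;> simp
          · have h3 : ({x1, x2, x3} : Finset α).card = 3 :=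
              Finset.card_eq_three.2 ⟨x1, x2, x3, hx2ne1.symm, hx3ne1.symm, hx3ne2.symm, rfl⟩
            rw [h3, card_nbrL]
            exact hB3 y3 hy3B
        have he_x2y3 : (x2, y3) ∈ E := by
          have : x2 ∈ nbrL (swapE E) y3 := by rw [eq_y3]; simp
          exact mem_swapE.1 (mem_nbrL.1 this)
        have conf_y1 : ∀ x', (x', y1) ∈ E → x' = x1 ∨ x' = x2 ∨ x' = x3 := by
          intro x' hx'
          by_contra hc
          push_neg at hc
          obtain ⟨m1, m2, m3⟩ := hc
          -- path x'-y1-x1-y3-x3-y2-x2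
          exact hP1 ⟨x', x1, x3, x2, y1, y3, y2, m1, m3, m2,
            hx3ne1.symm, hx2ne1.symm, hx3ne2,
            hy3ne1.symm, hy2ne1.symm, hy3ne2,
            hx', he1, he_x1y3, he5, he4, he3⟩
        have he_x3y1 : (x3, y1) ∈ E := by
          have h3 : ({x1, x2, x3} : Finset α).card = 3 :=
            Finset.card_eq_three.2 ⟨x1, x2, x3, hx2ne1.symm, hx3ne1.symm, hx3ne2.symm, rfl⟩
          have eq_y1 : nbrL (swapE E) y1 = {x1, x2, x3} := by
            apply Finset.eq_of_subset_of_card_le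
            · intro x' hx'
              rcases conf_y1 x' (mem_swapE.1 (mem_nbrL.1 hx')) with rfl | rfl | rfl <;> simp
            · rw [h3, card_nbrL]
              exact hB3 y1 hy1B
          have : x3 ∈ nbrL (swapE E) y1 := by rw [eq_y1]; simp
          exact mem_swapE.1 (mem_nbrL.1 this)
        have conf_y2 : ∀ x', (x', y2) ∈ E → x' = x1 ∨ x' = x2 ∨ x' = x3 := by
          intro x' hx'
          by_contra hc
          push_neg at hc
          obtain ⟨m1, m2, m3⟩ := hc
          -- path x'-y2-x2-y1-x1-y3-x3
          exact hP1 ⟨x', x2, x1, x3, y2, y1, y3, m2, m1, m3,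
            hx2ne1, hx3ne2.symm, hx3ne1.symm,
            hy2ne1, hy3ne2.symm, hy3ne1.symm,
            hx', he3, he2, he1, he_x1y3, he5⟩
        have conf_x2 : ∀ y', (x2, y') ∈ E → y' = y1 ∨ y' = y2 ∨ y' = y3 := by
          intro y' hy'
          by_contra hc
          push_neg at hc
          obtain ⟨m1, m2, m3⟩ := hc
          -- path y'-x2-y1-x1-y3-x3-y2
          exact hP2 ⟨y', y1, y3, y2, x2, x1, x3, m1, m3, m2,
            hy3ne1.symm, hy2ne1.symm, hy3ne2,
            hx2ne1, hx3ne2.symm, hx3ne1.symm,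
            mem_swapE.2 hy', mem_swapE.2 he2, mem_swapE.2 he1, mem_swapE.2 he_x1y3,
            mem_swapE.2 he5, mem_swapE.2 he4⟩
        have conf_x3 : ∀ y', (x3, y') ∈ E → y' = y1 ∨ y' = y2 ∨ y' = y3 := by
          intro y' hy'
          by_contra hc
          push_neg at hc
          obtain ⟨m1, m2, m3⟩ := hc
          -- path y'-x3-y2-x2-y1-x1-y3
          exact hP2 ⟨y', y2, y1, y3, x3, x2, x1, m2, m1, m3,
            hy2ne1, hy3ne2.symm, hy3ne1.symm,
            hx3ne2, hx3ne1, hx2ne1,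
            mem_swapE.2 hy', mem_swapE.2 he4, mem_swapE.2 he3, mem_swapE.2 he2,
            mem_swapE.2 he1, mem_swapE.2 he_x1y3⟩
        -- the K33 block
        set XS : Finset α := {x1, x2, x3} with hXSdef
        set YS : Finset β := {y1, y2, y3} with hYSdef
        have hXScard : XS.card = 3 :=
          Finset.card_eq_three.2 ⟨x1, x2, x3, hx2ne1.symm, hx3ne1.symm, hx3ne2.symm, rfl⟩
        have hYScard : YS.card = 3 :=
          Finset.card_eq_three.2 ⟨y1, y2, y3, hy2ne1.symm, hy3ne1.symm, hy3ne2.symm, rfl⟩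
        have hXSA : XS ⊆ A := by
          rw [hXSdef]
          intro u hu
          simp only [Finset.mem_insert, Finset.mem_singleton] at hu
          rcases hu with rfl | rfl | rfl <;> assumption
        have hYSB : YS ⊆ B := by
          rw [hYSdef]
          intro u hu
          simp only [Finset.mem_insert, Finset.mem_singleton] at hu
          rcases hu with rfl | rfl | rfl <;> assumption
        have key : ∀ p ∈ E, (p.1 ∈ XS ↔ p.2 ∈ YS) := by
          rintro ⟨u, v⟩ hp
          simp only [hXSdef, hYSdef, Finset.mem_insert, Finset.mem_singleton]
          constructor
          · rintro (rfl | rfl | rfl)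
            · exact conf_x1 v hp
            · exact conf_x2 v hp
            · exact conf_x3 v hp
          · rintro (rfl | rfl | rfl)
            · exact conf_y1 u hp
            · exact conf_y2 u hp
            · exact conf_y3 u hp
        have hblock : E.filter (fun p => p.1 ∈ XS) = XS ×ˢ YS := by
          ext ⟨u, v⟩
          simp only [Finset.mem_filter, Finset.mem_product]
          constructor
          · rintro ⟨hp, hu⟩
            exact ⟨hu, (key _ hp).1 hu⟩
          · rintro ⟨hu, hv⟩
            refine ⟨?_, hu⟩
            rw [hXSdef] at hu
            simp only [Finset.mem_insert, Finset.mem_singleton] at hu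
            rw [hYSdef] at hv
            simp only [Finset.mem_insert, Finset.mem_singleton] at hv
            rcases hu with rfl | rfl | rfl <;> rcases hv with rfl | rfl | rfl <;>
              first
                | exact he1 | exact he2 | exact he3 | exact he4 | exact he5
                | exact he_x1y2 | exact he_x1y3 | exact he_x2y3 | exact he_x3y1
        have hsplit := Finset.card_filter_add_card_filter_not
          (s := E) (p := fun p => p.1 ∈ XS)
        rw [hblock, Finset.card_product, hXScard, hYScard] at hsplit
        set E' := E.filter (fun p => ¬ (p.1 ∈ XS)) with hE'def
        have hAcard : 3 ≤ A.card := hXScard ▸ Finset.card_le_card hXSA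
        have hBcard : 3 ≤ B.card := hYScard ▸ Finset.card_le_card hYSB
        have hsupp' : ∀ p ∈ E', p.1 ∈ A \ XS ∧ p.2 ∈ B \ YS := by
          intro p hp
          have hmem := Finset.mem_filter.1 hp
          refine ⟨Finset.mem_sdiff.2 ⟨(hsupp p hmem.1).1, hmem.2⟩,
            Finset.mem_sdiff.2 ⟨(hsupp p hmem.1).2, ?_⟩⟩
          intro hv
          exact hmem.2 ((key _ hmem.1).2 hv)
        by_cases hE' : E'.Nonempty
        · have hsub : E' ⊆ E := Finset.filter_subset _ _
          have hres := IH α β (A \ XS) (B \ YS) E'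
            (by
              rw [Finset.card_sdiff_of_subset hXSA, Finset.card_sdiff_of_subset hYSB, hXScard, hYScard]
              omega)
            hsupp'
            (fun h => hP1 (P7L_mono hsub h))
            (fun h => hP2 (P7L_mono (swapE_mono hsub) h))
            hE'
          rw [Finset.card_sdiff_of_subset hXSA, Finset.card_sdiff_of_subset hYSB, hXScard, hYScard] at hres
          omega
        · rw [Finset.not_nonempty_iff_eq_empty] at hE'
          rw [hE', Finset.card_empty] at hsplit
          omega


lemma pick4 {γ : Type*} [DecidableEq γ] {s : Finset γ} (h : 4 ≤ s.card) (a b c : γ) :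
    ∃ d ∈ s, d ≠ a ∧ d ≠ b ∧ d ≠ c := by
  have h2 : ({a, b, c} : Finset γ).card ≤ 3 :=
    (Finset.card_insert_le _ _).trans (by
      have := Finset.card_insert_le b ({c} : Finset γ)
      simp at this ⊢
      omega)
  have h3 := Finset.le_card_sdiff ({a, b, c} : Finset γ) s
  obtain ⟨d, hd⟩ := Finset.card_pos.1 (show 0 < (s \ {a, b, c}).card by omega)
  rw [Finset.mem_sdiff] at hd
  refine ⟨d, hd.1, ?_, ?_, ?_⟩ <;> intro hh <;> apply hd.2 <;> simp [hh]

lemma card_le_prod {α β : Type*} [DecidableEq α] [DecidableEq β]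
    (A : Finset α) (B : Finset β) (E : Finset (α × β))
    (hsupp : ∀ p ∈ E, p.1 ∈ A ∧ p.2 ∈ B) :
    E.card ≤ A.card * B.card := by
  calc E.card ≤ (A ×ˢ B).card := Finset.card_le_card (fun p hp =>
        Finset.mem_product.2 (hsupp p hp))
    _ = A.card * B.card := Finset.card_product _ _

lemma three_rows {α β : Type*} [DecidableEq α] [DecidableEq β]
    (A : Finset α) (B : Finset β) (E : Finset (α × β))
    (hsupp : ∀ p ∈ E, p.1 ∈ A ∧ p.2 ∈ B)
    (hA : A.card = 3) (hB : 4 ≤ B.card)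
    (hP2 : ¬ P7L (swapE E)) :
    E.card ≤ 2 * B.card + 2 := by
  by_contra hcon
  push_neg at hcon
  obtain ⟨x, y, z, hxy, hxz, hyz, hAeq⟩ := Finset.card_eq_three.1 hA
  set F := swapE E with hFdef
  have hFsupp : ∀ q ∈ F, q.1 ∈ B ∧ q.2 ∈ A := by
    rintro ⟨v, u⟩ hq
    have := hsupp _ (mem_swapE.1 hq)
    exact ⟨this.2, this.1⟩
  have hFcard : F.card = E.card := card_swapE E
  have hsum : F.card = ∑ v ∈ B, degL F v :=
    Finset.card_eq_sum_card_fiberwise (fun q hq => (hFsupp q hq).1)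
  have hdeg3 : ∀ v, degL F v ≤ 3 := by
    intro v
    rw [← card_nbrL]
    calc (nbrL F v).card ≤ A.card := Finset.card_le_card (fun u hu =>
          (hFsupp _ (mem_nbrL.1 hu)).2)
      _ = 3 := hA
  set T := B.filter (fun v => (v, x) ∈ F ∧ (v, y) ∈ F ∧ (v, z) ∈ F) with hTdef
  have hTfull : ∀ v ∈ B, v ∉ T → degL F v ≤ 2 := by
    intro v hvB hvT
    by_contra hd
    push_neg at hd
    have hsub : nbrL F v ⊆ A := fun u hu => (hFsupp _ (mem_nbrL.1 hu)).2
    have heq : nbrL F v = A := Finset.eq_of_subset_of_card_le hsub (by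
      rw [card_nbrL, hA]; omega)
    apply hvT
    rw [hTdef, Finset.mem_filter]
    refine ⟨hvB, ?_, ?_, ?_⟩ <;> apply mem_nbrL.1 <;> rw [heq, hAeq] <;> simp
  have hsplitB := Finset.sum_filter_add_sum_filter_not B
    (fun v => (v, x) ∈ F ∧ (v, y) ∈ F ∧ (v, z) ∈ F) (fun v => degL F v)
  have hcard_split := Finset.card_filter_add_card_filter_not
    (s := B) (p := fun v => (v, x) ∈ F ∧ (v, y) ∈ F ∧ (v, z) ∈ F)
  rw [← hTdef] at hsplitB hcard_split
  have hsumT : ∑ v ∈ T, degL F v ≤ 3 * T.card := by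
    rw [mul_comm]
    apply Finset.sum_le_card_nsmul
    intro v _
    exact hdeg3 v
  have hsumT' : ∑ v ∈ B.filter (fun v => ¬ ((v, x) ∈ F ∧ (v, y) ∈ F ∧ (v, z) ∈ F)),
      degL F v ≤ 2 * (B.filter (fun v => ¬ ((v, x) ∈ F ∧ (v, y) ∈ F ∧ (v, z) ∈ F))).card := by
    rw [mul_comm]
    apply Finset.sum_le_card_nsmul
    intro v hv
    rw [Finset.mem_filter] at hv
    exact hTfull v hv.1 (by rw [hTdef, Finset.mem_filter]; tauto)
  have hT3 : 3 ≤ T.card := by omega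
  -- the support has at least 4 elements
  set S := B.filter (fun v => 0 < degL F v) with hSdef
  have hS4 : 4 ≤ S.card := by
    have hsumS : ∑ v ∈ B, degL F v ≤ ∑ v ∈ S, degL F v := by
      rw [hSdef]
      rw [← Finset.sum_filter_add_sum_filter_not B (fun v => 0 < degL F v) (fun v => degL F v)]
      have : ∑ v ∈ B.filter (fun v => ¬ 0 < degL F v), degL F v = 0 := by
        apply Finset.sum_eq_zero
        intro v hv
        rw [Finset.mem_filter] at hv
        omega
      omega
    have hSb : ∑ v ∈ S, degL F v ≤ 3 * S.card := by
      rw [mul_comm]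
      apply Finset.sum_le_card_nsmul
      intro v _
      exact hdeg3 v
    have : 2 * B.card + 3 ≤ 3 * S.card := by
      rw [hFcard] at hsum
      omega
    omega
  have hTS : T ⊆ S := by
    intro v hv
    rw [hTdef, Finset.mem_filter] at hv
    rw [hSdef, Finset.mem_filter]
    refine ⟨hv.1, ?_⟩
    rw [← card_nbrL]
    exact Finset.card_pos.2 ⟨x, mem_nbrL.2 hv.2.1⟩
  -- get three distinct elements of T
  obtain ⟨t1, ht1⟩ := Finset.card_pos.1 (show 0 < T.card by omega)
  obtain ⟨t2, ht2, ht21, -⟩ := pick3 hT3 t1 t1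
  obtain ⟨t3, ht3, ht31, ht32⟩ := pick3 hT3 t1 t2
  have hTmem : ∀ t ∈ T, (t, x) ∈ F ∧ (t, y) ∈ F ∧ (t, z) ∈ F := by
    intro t ht
    rw [hTdef, Finset.mem_filter] at ht
    exact ht.2
  by_cases hST : S ⊆ T
  · -- T has at least 4 elements
    have hT4 : 4 ≤ T.card := le_trans hS4 (Finset.card_le_card hST)
    obtain ⟨t4, ht4, ht41, ht42, ht43⟩ := pick4 hT4 t1 t2 t3
    obtain ⟨e1x, e1y, e1z⟩ := hTmem t1 ht1
    obtain ⟨e2x, e2y, e2z⟩ := hTmem t2 ht2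
    obtain ⟨e3x, e3y, e3z⟩ := hTmem t3 ht3
    obtain ⟨e4x, e4y, e4z⟩ := hTmem t4 ht4
    exact hP2 ⟨t1, t2, t3, t4, x, y, z, ht21.symm, ht31.symm, ht41.symm,
      ht32.symm, ht42.symm, ht43.symm, hxy, hxz, hyz,
      e1x, e2x, e2y, e3y, e3z, e4z⟩
  · obtain ⟨u, huS, huT⟩ := Finset.not_subset.1 hST
    have hu1 : u ≠ t1 := fun h => huT (h ▸ ht1)
    have hu2 : u ≠ t2 := fun h => huT (h ▸ ht2)
    have hu3 : u ≠ t3 := fun h => huT (h ▸ ht3)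
    rw [hSdef, Finset.mem_filter] at huS
    have hupos : 0 < degL F u := huS.2
    rw [← card_nbrL] at hupos
    obtain ⟨w, hw⟩ := Finset.card_pos.1 hupos
    have hwF : (u, w) ∈ F := mem_nbrL.1 hw
    have hwA : w ∈ A := (hFsupp _ hwF).2
    obtain ⟨e1x, e1y, e1z⟩ := hTmem t1 ht1
    obtain ⟨e2x, e2y, e2z⟩ := hTmem t2 ht2
    obtain ⟨e3x, e3y, e3z⟩ := hTmem t3 ht3
    rw [hAeq] at hwA
    simp only [Finset.mem_insert, Finset.mem_singleton] at hwA
    rcases hwA with rfl | rfl | rfl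
    · exact hP2 ⟨u, t1, t2, t3, w, y, z, hu1, hu2, hu3,
        ht21.symm, ht31.symm, ht32.symm, hxy, hxz, hyz,
        hwF, e1x, e1y, e2y, e2z, e3z⟩
    · exact hP2 ⟨u, t1, t2, t3, w, x, z, hu1, hu2, hu3,
        ht21.symm, ht31.symm, ht32.symm, hxy.symm, hyz, hxz,
        hwF, e1y, e1x, e2x, e2z, e3z⟩
    · exact hP2 ⟨u, t1, t2, t3, w, x, y, hu1, hu2, hu3,
        ht21.symm, ht31.symm, ht32.symm, hxz.symm, hyz.symm, hxy,
        hwF, e1z, e1x, e2x, e2y, e3y⟩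



lemma copy_of_P7L {a b : ℕ} {G : SimpleGraph (Fin a ⊕ Fin b)}
    {E : Finset (Fin a × Fin b)}
    (hE : ∀ q ∈ E, G.Adj (Sum.inl q.1) (Sum.inr q.2))
    (h : P7L E) : ContainsCopy G (pathG 7) := by
  obtain ⟨x1, x2, x3, x4, y1, y2, y3, d12, d13, d14, d23, d24, d34, e12, e13, e23,
    m1, m2, m3, m4, m5, m6⟩ := h
  have a1 := hE _ m1
  have a2 := hE _ m2
  have a3 := hE _ m3
  have a4 := hE _ m4
  have a5 := hE _ m5
  have a6 := hE _ m6
  simp only at a1 a2 a3 a4 a5 a6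
  refine ⟨![Sum.inl x1, Sum.inr y1, Sum.inl x2, Sum.inr y2, Sum.inl x3, Sum.inr y3,
    Sum.inl x4], ?_, ?_⟩
  · intro i j hij
    fin_cases i <;> fin_cases j <;>
      first
        | rfl
        | (simp at hij; done)
        | exact absurd (Sum.inl.inj hij) (by assumption)
        | exact absurd (Sum.inl.inj hij).symm (by assumption)
        | exact absurd (Sum.inr.inj hij) (by assumption)
        | exact absurd (Sum.inr.inj hij).symm (by assumption)
  · intro i j hij
    have hv : i.val + 1 = j.val ∨ j.val + 1 = i.val := hij
    clear hij
    fin_cases i <;> fin_cases j <;>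
      first
        | (exfalso; revert hv; decide)
        | exact a1 | exact a2 | exact a3 | exact a4 | exact a5 | exact a6
        | exact a1.symm | exact a2.symm | exact a3.symm | exact a4.symm
        | exact a5.symm | exact a6.symm

lemma copy_of_P7R {a b : ℕ} {G : SimpleGraph (Fin a ⊕ Fin b)}
    {E : Finset (Fin a × Fin b)}
    (hE : ∀ q ∈ E, G.Adj (Sum.inl q.1) (Sum.inr q.2))
    (h : P7L (swapE E)) : ContainsCopy G (pathG 7) := by
  obtain ⟨y1, y2, y3, y4, x1, x2, x3, d12, d13, d14, d23, d24, d34, e12, e13, e23,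
    m1, m2, m3, m4, m5, m6⟩ := h
  have a1 := hE _ (mem_swapE.1 m1)
  have a2 := hE _ (mem_swapE.1 m2)
  have a3 := hE _ (mem_swapE.1 m3)
  have a4 := hE _ (mem_swapE.1 m4)
  have a5 := hE _ (mem_swapE.1 m5)
  have a6 := hE _ (mem_swapE.1 m6)
  simp only at a1 a2 a3 a4 a5 a6
  refine ⟨![Sum.inr y1, Sum.inl x1, Sum.inr y2, Sum.inl x2, Sum.inr y3, Sum.inl x3,
    Sum.inr y4], ?_, ?_⟩
  · intro i j hij
    fin_cases i <;> fin_cases j <;>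
      first
        | rfl
        | (simp at hij; done)
        | exact absurd (Sum.inl.inj hij) (by assumption)
        | exact absurd (Sum.inl.inj hij).symm (by assumption)
        | exact absurd (Sum.inr.inj hij) (by assumption)
        | exact absurd (Sum.inr.inj hij).symm (by assumption)
  · intro i j hij
    have hv : i.val + 1 = j.val ∨ j.val + 1 = i.val := hij
    clear hij
    fin_cases i <;> fin_cases j <;>
      first
        | (exfalso; revert hv; decide)
        | exact a1 | exact a2 | exact a3 | exact a4 | exact a5 | exact a6
        | exact a1.symm | exact a2.symm | exact a3.symm | exact a4.symm
        | exact a5.symm | exact a6.symm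


lemma edge_ncard {a b : ℕ} (G : SimpleGraph (Fin a ⊕ Fin b)) [DecidableRel G.Adj]
    (hbip : IsBip G) :
    G.edgeSet.ncard =
      (Finset.univ.filter
        (fun p : Fin a × Fin b => G.Adj (Sum.inl p.1) (Sum.inr p.2))).card := by
  classical
  set E := Finset.univ.filter
    (fun p : Fin a × Fin b => G.Adj (Sum.inl p.1) (Sum.inr p.2)) with hE
  have hinj : Function.Injective
      (fun p : Fin a × Fin b => s(Sum.inl p.1, Sum.inr p.2)) := by
    intro p q h
    simp only [Sym2.eq_iff] at h
    rcases h with ⟨h1, h2⟩ | ⟨h1, h2⟩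
    · exact Prod.ext (Sum.inl.inj h1) (Sum.inr.inj h2)
    · exact absurd h1 (by simp)
  have hset : G.edgeSet =
      ↑(E.image (fun p : Fin a × Fin b => s(Sum.inl p.1, Sum.inr p.2))) := by
    ext e
    refine Sym2.ind (fun u v => ?_) e
    simp only [SimpleGraph.mem_edgeSet, Finset.coe_image, Set.mem_image,
      Finset.mem_coe, hE, Finset.mem_filter, Finset.mem_univ, true_and]
    constructor
    · intro hadj
      rcases u with ui | ui <;> rcases v with vi | vi
      · simpa using hbip _ _ hadj
      · exact ⟨(ui, vi), hadj, rfl⟩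
      · exact ⟨(vi, ui), hadj.symm, Sym2.eq_swap⟩
      · simpa using hbip _ _ hadj
    · rintro ⟨⟨pa, pb⟩, hadj, he⟩
      simp only at hadj he
      rw [Sym2.eq_iff] at he
      rcases he with ⟨h1, h2⟩ | ⟨h1, h2⟩
      · rw [← h1, ← h2]; exact hadj
      · rw [← h1, ← h2]; exact hadj.symm
  rw [hset, Set.ncard_coe_finset, Finset.card_image_of_injective _ hinj]

lemma no_p7_two {b : ℕ} (G : SimpleGraph (Fin 2 ⊕ Fin b)) (hbip : IsBip G) :
    ¬ ContainsCopy G (pathG 7) := by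
  rintro ⟨f, hinj, hadj⟩
  have b01 : (f ⟨0, by omega⟩).isLeft ≠ (f ⟨1, by omega⟩).isLeft :=
    hbip _ _ (hadj (Or.inl rfl))
  have b12 : (f ⟨1, by omega⟩).isLeft ≠ (f ⟨2, by omega⟩).isLeft :=
    hbip _ _ (hadj (Or.inl rfl))
  have b23 : (f ⟨2, by omega⟩).isLeft ≠ (f ⟨3, by omega⟩).isLeft :=
    hbip _ _ (hadj (Or.inl rfl))
  have b34 : (f ⟨3, by omega⟩).isLeft ≠ (f ⟨4, by omega⟩).isLeft :=
    hbip _ _ (hadj (Or.inl rfl))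
  have b45 : (f ⟨4, by omega⟩).isLeft ≠ (f ⟨5, by omega⟩).isLeft :=
    hbip _ _ (hadj (Or.inl rfl))
  have btrans : ∀ x y z : Bool, x ≠ y → y ≠ z → x = z := by decide
  have fin2 : ∀ u v w : Fin 2, u ≠ v → u ≠ w → v ≠ w → False := by decide
  have hne : ∀ (i j : Fin 7) (ui uj : Fin 2), i ≠ j →
      f i = Sum.inl ui → f j = Sum.inl uj → ui ≠ uj := by
    intro i j ui uj hij hfi hfj h
    subst h
    exact hij (hinj (hfi.trans hfj.symm))
  by_cases h0 : (f ⟨0, by omega⟩).isLeft = true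
  · have h2 : (f ⟨2, by omega⟩).isLeft = true := (btrans _ _ _ b01 b12).symm.trans h0
    have h4 : (f ⟨4, by omega⟩).isLeft = true := (btrans _ _ _ b23 b34).symm.trans h2
    obtain ⟨u0, hu0⟩ := Sum.isLeft_iff.1 h0
    obtain ⟨u2, hu2⟩ := Sum.isLeft_iff.1 h2
    obtain ⟨u4, hu4⟩ := Sum.isLeft_iff.1 h4
    exact fin2 u0 u2 u4
      (hne _ _ _ _ (by intro hh; exact absurd (congrArg Fin.val hh) (by decide)) hu0 hu2)
      (hne _ _ _ _ (by intro hh; exact absurd (congrArg Fin.val hh) (by decide)) hu0 hu4)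
      (hne _ _ _ _ (by intro hh; exact absurd (congrArg Fin.val hh) (by decide)) hu2 hu4)
  · have h0' : (f ⟨0, by omega⟩).isLeft = false := by
      cases hh : (f ⟨0, by omega⟩).isLeft
      · rfl
      · exact absurd hh h0
    have h1 : (f ⟨1, by omega⟩).isLeft = true := by
      cases hh : (f ⟨1, by omega⟩).isLeft
      · exact absurd (h0'.trans hh.symm) b01
      · rfl
    have h3 : (f ⟨3, by omega⟩).isLeft = true := (btrans _ _ _ b12 b23).symm.trans h1
    have h5 : (f ⟨5, by omega⟩).isLeft = true := (btrans _ _ _ b34 b45).symm.trans h3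
    obtain ⟨u1, hu1⟩ := Sum.isLeft_iff.1 h1
    obtain ⟨u3, hu3⟩ := Sum.isLeft_iff.1 h3
    obtain ⟨u5, hu5⟩ := Sum.isLeft_iff.1 h5
    exact fin2 u1 u3 u5
      (hne _ _ _ _ (by intro hh; exact absurd (congrArg Fin.val hh) (by decide)) hu1 hu3)
      (hne _ _ _ _ (by intro hh; exact absurd (congrArg Fin.val hh) (by decide)) hu1 hu5)
      (hne _ _ _ _ (by intro hh; exact absurd (congrArg Fin.val hh) (by decide)) hu3 hu5)

lemma bipGraph_adj {m n : ℕ} (r : Fin m → Fin n → Prop) (i : Fin m) (j : Fin n) :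
    (bipGraph m n r).Adj (Sum.inl i) (Sum.inr j) ↔ r i j := by
  constructor
  · rintro (⟨i', j', hr, h1, h2⟩ | ⟨i', j', hr, h1, h2⟩)
    · rw [Sum.inl.injEq] at h1
      rw [Sum.inr.injEq] at h2
      subst h1; subst h2; exact hr
    · exact absurd h1 (by simp)
  · intro hr
    exact Or.inl ⟨i, j, hr, rfl, rfl⟩

lemma bipGraph_isBip {m n : ℕ} (r : Fin m → Fin n → Prop) : IsBip (bipGraph m n r) := by
  rintro a b (⟨i, j, hr, rfl, rfl⟩ | ⟨i, j, hr, rfl, rfl⟩) <;> simp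

lemma nat_bound (p m a b e : ℕ) (hp : 3 ≤ p) (hm : 3 * p + 1 ≤ m) (hb : b + p ≤ m)
    (htriv : e ≤ a * b)
    (h3 : a = 3 → 4 ≤ b → e ≤ 2 * b + 2)
    (hcore : 1 ≤ e → e + 3 ≤ 2 * a + 2 * b) :
    (a = 2 ∧ b = m - p ∧ e ≤ 2 * b) ∨
      (e : ℤ) < (p : ℤ) * ((a : ℤ) - 2) + (m : ℤ) - (p : ℤ) + (b : ℤ) := by
  rcases a with _ | _ | _ | _ | k
  · right
    have he : e = 0 := by omega
    subst he
    push_cast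
    linarith
  · right
    have he : e ≤ b := by omega
    push_cast
    linarith
  · by_cases hbm : b = m - p
    · left
      exact ⟨rfl, hbm, by omega⟩
    · right
      have hblt : b + p < m := by omega
      have he : e ≤ 2 * b := by omega
      push_cast
      linarith
  · right
    by_cases hb4 : 4 ≤ b
    · have he : e ≤ 2 * b + 2 := h3 rfl hb4
      push_cast
      linarith
    · have he : e ≤ 3 * b := by omega
      have hb3 : b ≤ 3 := by omega
      push_cast
      linarith
  · right
    rcases Nat.eq_zero_or_pos e with he | he
    · subst he
      have hq : 3 * (k + 2) ≤ p * (k + 2) := Nat.mul_le_mul_right _ hp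
      have hqz : (3 : ℤ) * ((k : ℤ) + 2) ≤ (p : ℤ) * ((k : ℤ) + 2) := by exact_mod_cast hq
      push_cast
      linarith
    · have he2 := hcore he
      have hq : 3 * (k + 2) ≤ p * (k + 2) := Nat.mul_le_mul_right _ hp
      have hqz : (3 : ℤ) * ((k : ℤ) + 2) ≤ (p : ℤ) * ((k : ℤ) + 2) := by exact_mod_cast hq
      have he2z : (e : ℤ) + 3 ≤ 2 * ((k : ℤ) + 4) + 2 * (b : ℤ) := by exact_mod_cast he2
      push_cast
      linarith

end BipP7


theorem statement_12 (p m n₁ m₁ : ℕ) (hp : 3 ≤ p) (hm : 3 * p + 1 ≤ m)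
    (hm₁ : m₁ ≤ m - p) :
    (bipEx n₁ m₁ (pathG 7) : ℤ) ≤ (p : ℤ) * ((n₁ : ℤ) - 2) + (m : ℤ) - (p : ℤ) + (m₁ : ℤ) ∧
    ((bipEx n₁ m₁ (pathG 7) : ℤ) = (p : ℤ) * ((n₁ : ℤ) - 2) + (m : ℤ) - (p : ℤ) + (m₁ : ℤ) ↔
      n₁ = 2 ∧ m₁ = m - p) := by
  classical
  have hpm : p ≤ m := by omega
  have hbm : m₁ + p ≤ m := by omega
  set SS := {e | ∃ G : SimpleGraph (Fin n₁ ⊕ Fin m₁),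
      IsBip G ∧ ¬ ContainsCopy G (pathG 7) ∧ G.edgeSet.ncard = e} with hSS
  have hbipEx : bipEx n₁ m₁ (pathG 7) = sSup SS := by rw [hSS]; rfl
  have hbot : (0 : ℕ) ∈ SS := by
    rw [hSS]
    refine ⟨⊥, ?_, ?_, ?_⟩
    · intro a b h
      simp at h
    · rintro ⟨f, -, hadj⟩
      exact hadj (show (pathG 7).Adj ⟨0, by omega⟩ ⟨1, by omega⟩ from Or.inl rfl)
    · simp
  have hbdd : BddAbove SS := by
    refine ⟨Fintype.card (Sym2 (Fin n₁ ⊕ Fin m₁)), ?_⟩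
    rintro e ⟨G, -, -, hc⟩
    rw [← hc]
    calc G.edgeSet.ncard ≤ (Set.univ : Set (Sym2 (Fin n₁ ⊕ Fin m₁))).ncard :=
        Set.ncard_le_ncard (Set.subset_univ _) Set.finite_univ
      _ = _ := by rw [Set.ncard_univ, Nat.card_eq_fintype_card]
  obtain ⟨G, hbip, hnc, hcard⟩ := Nat.sSup_mem ⟨0, hbot⟩ hbdd
  letI : DecidableRel G.Adj := Classical.decRel _
  set E : Finset (Fin n₁ × Fin m₁) :=
    Finset.univ.filter (fun q => G.Adj (Sum.inl q.1) (Sum.inr q.2)) with hEdef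
  have hEadj : ∀ q ∈ E, G.Adj (Sum.inl q.1) (Sum.inr q.2) := by
    intro q hq
    exact (Finset.mem_filter.1 hq).2
  have hEcard : E.card = sSup SS := by
    rw [← hcard, BipP7.edge_ncard G hbip]
  have hP1 : ¬ BipP7.P7L E := fun h => hnc (BipP7.copy_of_P7L hEadj h)
  have hP2 : ¬ BipP7.P7L (BipP7.swapE E) := fun h => hnc (BipP7.copy_of_P7R hEadj h)
  have hsupp : ∀ q ∈ E, q.1 ∈ (Finset.univ : Finset (Fin n₁)) ∧
      q.2 ∈ (Finset.univ : Finset (Fin m₁)) :=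
    fun q _ => ⟨Finset.mem_univ _, Finset.mem_univ _⟩
  have htriv : E.card ≤ n₁ * m₁ := by
    have h := BipP7.card_le_prod _ _ E hsupp
    simpa using h
  rw [hbipEx, ← hEcard]
  by_cases hn2 : n₁ = 2 ∧ m₁ = m - p
  · obtain ⟨h2, hbmp⟩ := hn2
    subst h2
    have hnat : m₁ + p = m := by omega
    have hK : 2 * m₁ ∈ SS := by
      rw [hSS]
      refine ⟨bipGraph 2 m₁ (fun _ _ => True), BipP7.bipGraph_isBip _,
        BipP7.no_p7_two _ (BipP7.bipGraph_isBip _), ?_⟩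
      letI : DecidableRel (bipGraph 2 m₁ (fun _ _ => True)).Adj := Classical.decRel _
      rw [BipP7.edge_ncard _ (BipP7.bipGraph_isBip _)]
      have huniv : Finset.univ.filter
          (fun q : Fin 2 × Fin m₁ =>
            (bipGraph 2 m₁ (fun _ _ => True)).Adj (Sum.inl q.1) (Sum.inr q.2))
          = Finset.univ := by
        ext q
        simp [BipP7.bipGraph_adj]
      rw [huniv]
      simp [Finset.card_univ]
    have hge : 2 * m₁ ≤ sSup SS := le_csSup hbdd hK
    have heq : E.card = 2 * m₁ := by omega
    have hmz : (m₁ : ℤ) + (p : ℤ) = (m : ℤ) := by exact_mod_cast hnat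
    have heqz : (E.card : ℤ) = 2 * (m₁ : ℤ) := by exact_mod_cast heq
    constructor
    · push_cast
      linarith
    · exact ⟨fun _ => ⟨rfl, hbmp⟩, fun _ => by push_cast; linarith⟩
  · have h3 : n₁ = 3 → 4 ≤ m₁ → E.card ≤ 2 * m₁ + 2 := by
      intro h3 h4
      have h := BipP7.three_rows Finset.univ Finset.univ E hsupp (by simp [h3]) (by simp [h4]) hP2
      simpa using h
    have hcore : 1 ≤ E.card → E.card + 3 ≤ 2 * n₁ + 2 * m₁ := by
      intro hne
      have h := BipP7.core (n₁ + m₁) (Fin n₁) (Fin m₁) Finset.univ Finset.univ E (by simp)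
        hsupp hP1 hP2 (Finset.card_pos.1 hne)
      simpa using h
    rcases BipP7.nat_bound p m n₁ m₁ E.card hp hm hbm htriv h3 hcore with ⟨ha, hb, -⟩ | hlt
    · exact absurd ⟨ha, hb⟩ hn2
    · exact ⟨le_of_lt hlt, ⟨fun h => absurd h (ne_of_lt hlt), fun h => absurd h hn2⟩⟩
end

section
/- Let G=(A,B;E) be a bipartite graph with |A| = a and |B| = n, let b be a real number with 0 < b ≤ a, and set t = ⌈b⌉. If the number of edges of G satisfies e(G) ≥ b·n, then there exists a subset A′ ⊆ A with |A′| = t such that the number of common neighbours of the vertices of A′ in B is at least c·n, where c = (b − t + 1)/((a − t + 1)·C(a,t)) > 0 and C(a,t) denotes the binomial coefficient a choose t. -/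
open SimpleGraph

theorem statement_13 (a n : ℕ) (E : Fin a → Fin n → Prop) (b : ℝ)
    (hb0 : 0 < b) (hba : b ≤ (a : ℝ)) (t : ℕ) (ht : t = ⌈b⌉₊)
    (he : b * (n : ℝ) ≤ (({p : Fin a × Fin n | E p.1 p.2}.ncard : ℕ) : ℝ)) :
    0 < (b - (t : ℝ) + 1) / (((a : ℝ) - (t : ℝ) + 1) * ((a.choose t : ℕ) : ℝ)) ∧
    ∃ A' : Finset (Fin a), A'.card = t ∧
      (b - (t : ℝ) + 1) / (((a : ℝ) - (t : ℝ) + 1) * ((a.choose t : ℕ) : ℝ)) * (n : ℝ) ≤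
        (({j : Fin n | ∀ i ∈ A', E i j}.ncard : ℕ) : ℝ) := by
  classical
  have hb0' : (0:ℝ) ≤ b := hb0.le
  have hta : t ≤ a := by
    rw [ht]; exact Nat.ceil_le.mpr hba
  have ht1 : 1 ≤ t := by
    rw [ht]; exact Nat.one_le_ceil_iff.mpr hb0
  have hbt : b ≤ (t:ℝ) := ht ▸ Nat.le_ceil b
  have htb : (t:ℝ) < b + 1 := by
    rw [ht]; exact Nat.ceil_lt_add_one hb0'
  have hnum : 0 < b - (t:ℝ) + 1 := by linarith
  have htaR : (t:ℝ) ≤ (a:ℝ) := by exact_mod_cast hta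
  have hden1 : (1:ℝ) ≤ (a:ℝ) - t + 1 := by linarith
  have hchoosepos : (0:ℝ) < ((a.choose t : ℕ) : ℝ) := by
    exact_mod_cast Nat.choose_pos hta
  have hden : 0 < ((a:ℝ) - t + 1) * ((a.choose t : ℕ):ℝ) :=
    mul_pos (by linarith) hchoosepos
  refine ⟨div_pos hnum hden, ?_⟩
  set d : Fin n → ℕ := fun j => (Finset.univ.filter fun i => E i j).card with hd
  set N : Finset (Fin a) → ℕ :=
    fun S => (Finset.univ.filter fun j => ∀ i ∈ S, E i j).card with hN
  -- edge count
  have hEnat : {p : Fin a × Fin n | E p.1 p.2}.ncard = ∑ j, d j := by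
    rw [Set.ncard_eq_toFinset_card', Set.toFinset_setOf, Finset.card_filter,
      Fintype.sum_prod_type_right]
    exact Finset.sum_congr rfl fun j _ => (Finset.card_filter _ _).symm
  -- pointwise convexity bound
  have key : ∀ m : ℕ, (m:ℝ) - t + 1 ≤ ((a:ℝ) - t + 1) * ((m.choose t : ℕ):ℝ) := by
    intro m
    rcases lt_or_ge m t with hmt | htm
    · have h1 : (m:ℝ) + 1 ≤ (t:ℝ) := by exact_mod_cast hmt
      have h0 : (0:ℝ) ≤ ((a:ℝ) - t + 1) * ((m.choose t : ℕ):ℝ) := by positivity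
      linarith
    · have h1 : m - t + 1 ≤ m.choose t := by
        calc m - t + 1 = (m - t + 1).choose (m - t) := (Nat.choose_succ_self_right _).symm
          _ ≤ m.choose (m - t) := Nat.choose_le_choose _ (by omega)
          _ = m.choose t := Nat.choose_symm htm
      have h2 : ((m - t + 1 : ℕ):ℝ) ≤ ((m.choose t : ℕ):ℝ) := by exact_mod_cast h1
      have h3 : ((m - t + 1 : ℕ):ℝ) = (m:ℝ) - t + 1 := by
        push_cast [Nat.cast_sub htm]; ring
      have h4 : (0:ℝ) ≤ ((m.choose t : ℕ):ℝ) := by positivity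
      nlinarith
  -- sum lower bound
  have hsum1 : (n:ℝ) * (b - t + 1) ≤ ∑ j, (((a:ℝ) - t + 1) * (((d j).choose t : ℕ):ℝ)) := by
    have h5 : ∑ j, ((d j : ℝ) - t + 1) ≤
        ∑ j, (((a:ℝ) - t + 1) * (((d j).choose t : ℕ):ℝ)) :=
      Finset.sum_le_sum fun j _ => key (d j)
    have h6 : b * (n:ℝ) ≤ ∑ j, (d j : ℝ) := by
      have := he
      rw [hEnat] at this
      push_cast at this ⊢
      exact this
    have h7 : ∑ j, ((d j : ℝ) - t + 1) = (∑ j, (d j : ℝ)) - n * ((t:ℝ) - 1) := by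
      have he7 : ∀ j : Fin n, (d j : ℝ) - t + 1 = (d j : ℝ) - ((t:ℝ) - 1) := fun j => by ring
      simp_rw [he7, Finset.sum_sub_distrib, Finset.sum_const, Finset.card_univ,
        Fintype.card_fin, nsmul_eq_mul]
      ring
    nlinarith
  -- double counting
  set P := Finset.powersetCard t (Finset.univ : Finset (Fin a)) with hP
  have hDC : ∑ S ∈ P, N S = ∑ j, (d j).choose t := by
    have hNS : ∀ S, N S = ∑ j, if ∀ i ∈ S, E i j then 1 else 0 := fun S =>
      Finset.card_filter _ _
    simp_rw [hNS]
    rw [Finset.sum_comm]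
    refine Finset.sum_congr rfl fun j _ => ?_
    rw [← Finset.card_filter]
    have heq : P.filter (fun S => ∀ i ∈ S, E i j)
        = Finset.powersetCard t (Finset.univ.filter fun i => E i j) := by
      ext S
      simp only [hP, Finset.mem_filter, Finset.mem_powersetCard, Finset.subset_iff,
        Finset.mem_univ, true_and, Finset.mem_filter]
      tauto
    rw [heq, Finset.card_powersetCard]
  -- pigeonhole
  have hPcard : P.card = a.choose t := by
    rw [hP, Finset.card_powersetCard, Finset.card_univ, Fintype.card_fin]
  have hPne : P.Nonempty := by
    rw [hP, Finset.powersetCard_nonempty]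
    simpa using hta
  set c : ℝ := (b - (t:ℝ) + 1) / (((a:ℝ) - t + 1) * ((a.choose t : ℕ):ℝ)) with hc
  have hmain : ∑ S ∈ P, (c * n) ≤ ∑ S ∈ P, (N S : ℝ) := by
    have hcast : ∑ S ∈ P, (N S : ℝ) = ∑ j, (((d j).choose t : ℕ):ℝ) := by
      exact_mod_cast congrArg (Nat.cast : ℕ → ℝ) hDC
    rw [Finset.sum_const, hPcard, nsmul_eq_mul, hcast]
    have hCt : ((a.choose t : ℕ):ℝ) * (c * n) = (n:ℝ) * (b - t + 1) / ((a:ℝ) - t + 1) := by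
      rw [hc]; field_simp
    rw [hCt, div_le_iff₀ (by linarith : (0:ℝ) < (a:ℝ) - t + 1)]
    calc (n:ℝ) * (b - t + 1) ≤ ∑ j, (((a:ℝ) - t + 1) * (((d j).choose t : ℕ):ℝ)) := hsum1
      _ = (∑ j, (((d j).choose t : ℕ):ℝ)) * ((a:ℝ) - t + 1) := by
          rw [Finset.sum_mul]; exact Finset.sum_congr rfl fun j _ => by ring
  obtain ⟨S, hSP, hS⟩ := Finset.exists_le_of_sum_le hPne hmain
  refine ⟨S, (Finset.mem_powersetCard.mp hSP).2, ?_⟩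
  have hNS : {j : Fin n | ∀ i ∈ S, E i j}.ncard = N S := by
    rw [Set.ncard_eq_toFinset_card', Set.toFinset_setOf]
  rw [hNS]
  exact hS
end
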